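/- arXiv:2403.12657 — 7 statements merged into one kernel-verified Lean document; each statement's English description precedes it below -/
import Mathlib

section
/- Let (X, μ) be a probability space, T : X → X an invertible measure-preserving transformation, f ∈ L²(X, μ), and let σ_f be a finite positive Borel measure on the circle ℝ/ℤ ≅ [0,1) satisfying ∫ e^{2πikω} dσ_f(ω) = ∫ f(T^k x)·conj(f(x)) dμ(x) for all k ∈ ℤ. Then for every ω ∈ [0,1) and every r ∈ (0, 1/2], with N = ⌊1/(2r)⌋, one has σ_f(B(ω, r)) ≤ (π²/(4N))·G_N(f, ω), where G_N(f, ω) = N^{−1} ∫_X |Σ_{n=0}^{N−1} e^{−2πinω} f(T^n x)|² dμ(x) and B(ω, r) is the arc of radius r centered at ω in ℝ/ℤ. -/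
open MeasureTheory Filter Set Real

noncomputable section

/-- Distance on the circle `ℝ/ℤ` between (representatives of) two points. -/
def circDist (s t : ℝ) : ℝ := |s - t - round (s - t)|

/-- The closed ball (arc) of radius `r` around `ω` in the circle `ℝ/ℤ`, as a subset of `ℝ`. -/
def circBall (ω r : ℝ) : Set ℝ := {t | circDist t ω ≤ r}

/-- The `k`-th power (`k ∈ ℤ`) of an invertible transformation `T` with inverse `S`. -/
def zpowIter {X : Type*} (T S : X → X) (k : ℤ) : X → X :=
  if 0 ≤ k then T^[k.toNat] else S^[(-k).toNat]

lemma normSq_exp_mul_I_sub_one (θ : ℝ) :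
    Complex.normSq (Complex.exp ((θ:ℂ) * Complex.I) - 1) = 4 * Real.sin (θ/2) ^ 2 := by
  have h1 : (Complex.exp ((θ:ℂ) * Complex.I) - 1).re = Real.cos θ - 1 := by
    simp [Complex.exp_ofReal_mul_I_re]
  have h2 : (Complex.exp ((θ:ℂ) * Complex.I) - 1).im = Real.sin θ := by
    simp [Complex.exp_ofReal_mul_I_im]
  rw [Complex.normSq_apply, h1, h2]
  have hc : Real.cos θ = 1 - 2 * Real.sin (θ/2) ^ 2 := by
    have h := Real.cos_two_mul' (θ/2)
    have hpy := Real.sin_sq_add_cos_sq (θ/2)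
    have h22 : (2:ℝ) * (θ/2) = θ := by ring
    rw [h22] at h
    nlinarith
  have hpy := Real.sin_sq_add_cos_sq θ
  nlinarith

lemma dirichlet_lb (N : ℕ) (hN : 1 ≤ N) (s : ℝ) (hs : |s| ≤ 1/(2*N)) :
    4*(N:ℝ)^2/π^2 ≤ Complex.normSq (∑ n ∈ Finset.range N,
      Complex.exp (2*π*Complex.I*n*s)) := by
  have hNpos : (0:ℝ) < N := by exact_mod_cast hN
  have hN1 : (1:ℝ) ≤ N := by exact_mod_cast hN
  have hπ := Real.pi_gt_three
  rcases eq_or_ne s 0 with rfl | hs0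
  · have he : (∑ n ∈ Finset.range N, Complex.exp (2*π*Complex.I*n*((0:ℝ):ℂ))) = (N:ℂ) := by
      simp
    rw [he, Complex.normSq_natCast, div_le_iff₀ (by positivity)]
    have h9 : (9:ℝ) < π^2 := by nlinarith
    nlinarith [h9, mul_pos hNpos hNpos]
  · set q : ℂ := Complex.exp (2*π*Complex.I*s) with hq
    have hterm : ∀ n : ℕ, Complex.exp (2*π*Complex.I*n*s) = q ^ n := by
      intro n
      rw [hq, ← Complex.exp_nat_mul]
      ring_nf
    have hq1 : q ≠ 1 := by
      rw [hq]
      intro h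
      rw [Complex.exp_eq_one_iff] at h
      obtain ⟨k, hk⟩ := h
      have hne : (2*(π:ℂ)*Complex.I : ℂ) ≠ 0 := by
        simp [Complex.I_ne_zero, Real.pi_ne_zero]
      have h2 : (s:ℂ) * (2*π*Complex.I) = (k:ℂ) * (2*π*Complex.I) := by
        linear_combination hk
      have hsk' : (s:ℂ) = (k:ℂ) := mul_right_cancel₀ hne h2
      have hsk : s = (k:ℝ) := by exact_mod_cast hsk'
      have hk0 : k = 0 := by
        have h1 : |(k:ℝ)| ≤ 1/(2*N) := hsk ▸ hs
        have h12 : (1:ℝ)/(2*N) ≤ 1/2 :=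
          one_div_le_one_div_of_le (by norm_num) (by linarith)
        by_contra hk0
        have : (1:ℝ) ≤ |(k:ℝ)| := by
          rw [← Int.cast_abs]
          exact_mod_cast Int.one_le_abs (by exact_mod_cast hk0)
        linarith
      rw [hk0] at hsk
      simp at hsk
      exact hs0 hsk
    have hsum : (∑ n ∈ Finset.range N, Complex.exp (2*π*Complex.I*n*s))
        = (q ^ N - 1) / (q - 1) := by
      simp_rw [hterm]
      exact geom_sum_eq hq1 N
    rw [hsum, Complex.normSq_div]
    have hnum : Complex.normSq (q ^ N - 1) = 4 * Real.sin (π*N*s) ^ 2 := by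
      have h3 : q ^ N = Complex.exp (((2*π*N*s : ℝ):ℂ) * Complex.I) := by
        rw [hq, ← Complex.exp_nat_mul]
        push_cast
        ring_nf
      rw [h3, normSq_exp_mul_I_sub_one]
      ring_nf
    have hden : Complex.normSq (q - 1) = 4 * Real.sin (π*s) ^ 2 := by
      have h3 : q = Complex.exp (((2*π*s : ℝ):ℂ) * Complex.I) := by
        rw [hq]; push_cast; ring_nf
      rw [h3, normSq_exp_mul_I_sub_one]
      ring_nf
    rw [hnum, hden]
    set u := |s| with hu
    have hu0 : 0 < u := abs_pos.mpr hs0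
    have huN : u ≤ 1/(2*N) := hs
    have hsin_num : Real.sin (π*N*s)^2 = Real.sin (π*N*u)^2 := by
      rcases abs_cases s with ⟨h, _⟩ | ⟨h, _⟩
      · rw [hu, h]
      · rw [hu, h]; rw [show π*N*(-s) = -(π*N*s) by ring, Real.sin_neg]; ring
    have hsin_den : Real.sin (π*s)^2 = Real.sin (π*u)^2 := by
      rcases abs_cases s with ⟨h, _⟩ | ⟨h, _⟩
      · rw [hu, h]
      · rw [hu, h]; rw [show π*(-s) = -(π*s) by ring, Real.sin_neg]; ring
    rw [hsin_num, hsin_den]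
    have hNu' : (N:ℝ)*u ≤ 1/2 := by
      calc (N:ℝ)*u ≤ (N:ℝ)*(1/(2*N)) := by nlinarith
        _ = 1/2 := by field_simp <;> ring
    have hNu : π*N*u ≤ π/2 := by nlinarith
    have ha : 2*(N:ℝ)*u ≤ Real.sin (π*N*u) := by
      have h4 := Real.mul_le_sin (x := π*N*u) (by positivity) hNu
      have hπ0 : (0:ℝ) < π := by linarith
      calc 2*(N:ℝ)*u = 2/π * (π*N*u) := by field_simp
        _ ≤ Real.sin (π*N*u) := h4
    have hb : Real.sin (π*u) ≤ π*u := Real.sin_le (by positivity)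
    have hbpos : 0 < Real.sin (π*u) := by
      apply Real.sin_pos_of_pos_of_lt_pi (by positivity)
      nlinarith
    rw [div_le_div_iff₀ (by positivity) (by positivity)]
    have hb2 : Real.sin (π*u)^2 ≤ (π*u)^2 := pow_le_pow_left₀ hbpos.le hb 2
    have ha2 : (2*(N:ℝ)*u)^2 ≤ Real.sin (π*N*u)^2 :=
      pow_le_pow_left₀ (by positivity) ha 2
    nlinarith [mul_le_mul_of_nonneg_left hb2 (show (0:ℝ) ≤ 4*(N:ℝ)^2 by positivity),
      mul_le_mul_of_nonneg_left ha2 (show (0:ℝ) ≤ 4*π^2 by positivity)]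

lemma memLp_conj {X : Type*} [MeasurableSpace X] {μ : Measure X} {g : X → ℂ}
    (hg : MemLp g 2 μ) : MemLp (fun x => (starRingEnd ℂ) (g x)) 2 μ := by
  apply hg.of_le (continuous_star.comp_aestronglyMeasurable hg.1)
  filter_upwards with x
  simp

lemma integrable_mul_of_memLp2 {X : Type*} [MeasurableSpace X] {μ : Measure X}
    {g h : X → ℂ} (hg : MemLp g 2 μ) (hh : MemLp h 2 μ) :
    Integrable (fun x => g x * h x) μ := by
  rw [← memLp_one_iff_integrable]
  have h1 : MemLp (g • h) 1 μ := by
    exact MemLp.smul (r := 1) hh hg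
  have h2 : (g • h) = fun x => g x * h x := by
    funext x
    simp [smul_eq_mul]
  rwa [h2] at h1

/-- **Lemma.** A local estimate for the spectral measure of an observable `f` of an invertible
measure-preserving system in terms of the averaged squared twisted Birkhoff sums:
`σ_f(B(ω,r)) ≤ (π²/(4N)) G_N(f,ω)` with `N = ⌊1/(2r)⌋`. -/
theorem spectral_measure_ball_le_birkhoff
    {X : Type*} [MeasurableSpace X] (μ : Measure X) [IsProbabilityMeasure μ]
    (T S : X → X)
    (hTS : Function.LeftInverse S T) (hST : Function.RightInverse S T)
    (hT : MeasurePreserving T μ μ) (hS : MeasurePreserving S μ μ)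
    (f : X → ℂ) (hf : MemLp f 2 μ)
    (σ : Measure ℝ) [IsFiniteMeasure σ]
    (hsupp : σ (Set.Ico (0:ℝ) 1)ᶜ = 0)
    (hfourier : ∀ k : ℤ,
      (∫ t, Complex.exp (2 * π * Complex.I * k * t) ∂σ)
        = ∫ x, f (zpowIter T S k x) * (starRingEnd ℂ) (f x) ∂μ)
    (ω : ℝ) (hω : ω ∈ Set.Ico (0:ℝ) 1) (r : ℝ) (hr : r ∈ Set.Ioc (0:ℝ) (1/2)) :
    (σ (circBall ω r)).toReal ≤
      (π ^ 2 / (4 * (⌊1/(2*r)⌋₊ : ℝ))) *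
        ((1 / (⌊1/(2*r)⌋₊ : ℝ)) *
          ∫ x, ‖∑ n ∈ Finset.range ⌊1/(2*r)⌋₊,
              Complex.exp (-(2 * π * Complex.I * n * ω)) * f (T^[n] x)‖ ^ 2 ∂μ) := by
  obtain ⟨hr0, hr2⟩ := hr
  set N := ⌊1/(2*r)⌋₊ with hNdef
  have hN1 : 1 ≤ N := by
    apply Nat.le_floor
    rw [Nat.cast_one, le_div_iff₀ (by positivity)]
    linarith
  have hNposR : (0:ℝ) < N := by exact_mod_cast hN1
  have hNle : (N:ℝ) ≤ 1/(2*r) := Nat.floor_le (by positivity)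
  have hrN : r ≤ 1/(2*N) := by
    rw [le_div_iff₀ (by positivity)]
    rw [le_div_iff₀ (by positivity)] at hNle
    nlinarith
  -- notation
  set c : ℕ → ℂ := fun n => Complex.exp (-(2*π*Complex.I*n*ω)) with hc
  set D : ℝ → ℂ := fun t => ∑ n ∈ Finset.range N, c n * Complex.exp (2*π*Complex.I*n*t)
    with hD
  set Sf : X → ℂ := fun x => ∑ n ∈ Finset.range N, c n * f (T^[n] x) with hSf
  -- measurable embedding of iterates
  have hemb : ∀ m : ℕ, MeasurableEmbedding (T^[m]) := by
    intro m
    exact MeasurableEquiv.measurableEmbedding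
      { toEquiv := ⟨T^[m], S^[m], hTS.iterate m, hST.iterate m⟩
        measurable_toFun := hT.measurable.iterate m
        measurable_invFun := hS.measurable.iterate m }
  have memf : ∀ n : ℕ, MemLp (fun x => f (T^[n] x)) 2 μ := fun n =>
    hf.comp_measurePreserving (hT.iterate n)
  -- zpowIter composition
  have hzp : ∀ n m : ℕ, ∀ x : X, zpowIter T S ((n:ℤ)-(m:ℤ)) (T^[m] x) = T^[n] x := by
    intro n m x
    unfold zpowIter
    rcases le_or_gt m n with h | h
    · rw [if_pos (by omega)]
      have h1 : ((n:ℤ)-(m:ℤ)).toNat = n - m := by omega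
      rw [h1, ← Function.iterate_add_apply]
      congr 1
      omega
    · rw [if_neg (by omega)]
      have h1 : (-((n:ℤ)-(m:ℤ))).toNat = m - n := by omega
      rw [h1]
      have h2 : T^[m] x = T^[m-n] (T^[n] x) := by
        rw [← Function.iterate_add_apply]
        congr 1
        omega
      rw [h2]
      exact (hTS.iterate (m-n)) (T^[n] x)
  -- change of variables for correlations
  have hchg : ∀ n m : ℕ,
      (∫ x, f (T^[n] x) * (starRingEnd ℂ) (f (T^[m] x)) ∂μ)
        = ∫ t, Complex.exp (2*π*Complex.I*(((n:ℤ)-(m:ℤ) : ℤ):ℂ)*t) ∂σ := by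
    intro n m
    rw [hfourier ((n:ℤ)-(m:ℤ))]
    rw [← MeasurePreserving.integral_comp (hT.iterate m) (hemb m)
      (fun y => f (zpowIter T S ((n:ℤ)-(m:ℤ)) y) * (starRingEnd ℂ) (f y))]
    congr 1
    funext x
    rw [hzp n m x]
  -- integrability of correlation terms
  have hintcorr : ∀ n m : ℕ,
      Integrable (fun x => (c n * (starRingEnd ℂ) (c m)) *
        (f (T^[n] x) * (starRingEnd ℂ) (f (T^[m] x)))) μ := by
    intro n m
    exact (integrable_mul_of_memLp2 (memf n) (memLp_conj (memf m))).const_mul _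
  -- integrability of exponentials wrt σ
  have hexpInt : ∀ k : ℤ, Integrable (fun t : ℝ =>
      Complex.exp (2*π*Complex.I*(k:ℂ)*(t:ℂ))) σ := by
    intro k
    apply Integrable.mono' (integrable_const (1:ℝ))
    · apply Continuous.aestronglyMeasurable
      exact Complex.continuous_exp.comp (continuous_const.mul Complex.continuous_ofReal)
    · filter_upwards with t
      rw [Complex.norm_exp]
      simp [Complex.mul_re, Complex.mul_im]
  -- μ-side expansion
  have hμside : (∫ x, Sf x * (starRingEnd ℂ) (Sf x) ∂μ)
      = ∑ n ∈ Finset.range N, ∑ m ∈ Finset.range N,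
          (c n * (starRingEnd ℂ) (c m)) *
            ∫ t, Complex.exp (2*π*Complex.I*(((n:ℤ)-(m:ℤ) : ℤ):ℂ)*t) ∂σ := by
    have hpt : ∀ x, Sf x * (starRingEnd ℂ) (Sf x)
        = ∑ n ∈ Finset.range N, ∑ m ∈ Finset.range N,
            (c n * (starRingEnd ℂ) (c m)) *
              (f (T^[n] x) * (starRingEnd ℂ) (f (T^[m] x))) := by
      intro x
      rw [hSf]
      rw [map_sum, Finset.sum_mul_sum]
      apply Finset.sum_congr rfl
      intro n _
      apply Finset.sum_congr rfl
      intro m _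
      rw [map_mul]
      ring
    rw [integral_congr_ae (ae_of_all μ hpt)]
    rw [integral_finset_sum _ (fun n _ => integrable_finset_sum _
      (fun m _ => hintcorr n m))]
    apply Finset.sum_congr rfl
    intro n _
    rw [integral_finset_sum _ (fun m _ => hintcorr n m)]
    apply Finset.sum_congr rfl
    intro m _
    rw [integral_const_mul, hchg n m]
  -- σ-side expansion
  have hσside : (∫ t, D t * (starRingEnd ℂ) (D t) ∂σ)
      = ∑ n ∈ Finset.range N, ∑ m ∈ Finset.range N,
          (c n * (starRingEnd ℂ) (c m)) *
            ∫ t, Complex.exp (2*π*Complex.I*(((n:ℤ)-(m:ℤ) : ℤ):ℂ)*t) ∂σ := by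
    have hpt : ∀ t : ℝ, D t * (starRingEnd ℂ) (D t)
        = ∑ n ∈ Finset.range N, ∑ m ∈ Finset.range N,
            (c n * (starRingEnd ℂ) (c m)) *
              Complex.exp (2*π*Complex.I*(((n:ℤ)-(m:ℤ) : ℤ):ℂ)*t) := by
      intro t
      rw [hD]
      rw [map_sum, Finset.sum_mul_sum]
      apply Finset.sum_congr rfl
      intro n _
      apply Finset.sum_congr rfl
      intro m _
      rw [map_mul]
      have hconjexp : (starRingEnd ℂ) (Complex.exp (2*π*Complex.I*m*t))
          = Complex.exp (-(2*π*Complex.I*m*t)) := by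
        rw [← Complex.exp_conj]
        congr 1
        simp only [map_mul, map_ofNat, Complex.conj_I, Complex.conj_ofReal, map_natCast]
        ring
      rw [hconjexp]
      rw [show Complex.exp (2*π*Complex.I*(((n:ℤ)-(m:ℤ) : ℤ):ℂ)*t)
          = Complex.exp (2*π*Complex.I*n*t) * Complex.exp (-(2*π*Complex.I*m*t)) from by
        rw [← Complex.exp_add]; congr 1; push_cast; ring]
      ring
    rw [integral_congr_ae (ae_of_all σ hpt)]
    rw [integral_finset_sum _ (fun n _ => integrable_finset_sum _
      (fun m _ => (hexpInt _).const_mul _))]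
    apply Finset.sum_congr rfl
    intro n _
    rw [integral_finset_sum _ (fun m _ => (hexpInt _).const_mul _)]
    apply Finset.sum_congr rfl
    intro m _
    rw [integral_const_mul]
  -- the spectral identity over the reals
  have hreal : (∫ x, ‖Sf x‖ ^ 2 ∂μ) = ∫ t, Complex.normSq (D t) ∂σ := by
    have h1 : (∫ x, Sf x * (starRingEnd ℂ) (Sf x) ∂μ)
        = ((∫ x, ‖Sf x‖ ^ 2 ∂μ : ℝ) : ℂ) := by
      calc (∫ x, Sf x * (starRingEnd ℂ) (Sf x) ∂μ)
          = ∫ x, ((‖Sf x‖ ^ 2 : ℝ) : ℂ) ∂μ := by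
            apply integral_congr_ae
            filter_upwards with x
            rw [Complex.mul_conj]
            norm_cast
            rw [Complex.sq_norm]
        _ = ((∫ x, ‖Sf x‖ ^ 2 ∂μ : ℝ) : ℂ) := integral_ofReal
    have h2 : (∫ t, D t * (starRingEnd ℂ) (D t) ∂σ)
        = ((∫ t, Complex.normSq (D t) ∂σ : ℝ) : ℂ) := by
      calc (∫ t, D t * (starRingEnd ℂ) (D t) ∂σ)
          = ∫ t, ((Complex.normSq (D t) : ℝ) : ℂ) ∂σ := by
            apply integral_congr_ae
            filter_upwards with t
            rw [Complex.mul_conj]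
        _ = ((∫ t, Complex.normSq (D t) ∂σ : ℝ) : ℂ) := integral_ofReal
    have hcast : ((∫ x, ‖Sf x‖ ^ 2 ∂μ : ℝ) : ℂ)
        = ((∫ t, Complex.normSq (D t) ∂σ : ℝ) : ℂ) :=
      h1.symm.trans ((hμside.trans hσside.symm).trans h2)
    exact_mod_cast hcast
  -- lower bound for the Dirichlet kernel on the ball
  have hDlow : ∀ t : ℝ, circDist t ω ≤ r → 4*(N:ℝ)^2/π^2 ≤ Complex.normSq (D t) := by
    intro t ht
    set s : ℝ := t - ω - round (t - ω) with hs
    have hDt : D t = ∑ n ∈ Finset.range N, Complex.exp (2*π*Complex.I*n*s) := by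
      rw [hD]
      apply Finset.sum_congr rfl
      intro n _
      rw [hc]
      rw [show (2*π*Complex.I*(n:ℂ)*(s:ℂ)) = (-(2*π*Complex.I*n*ω)) + 2*π*Complex.I*n*t
          + ((-((n:ℤ)*(round (t-ω))) : ℤ) : ℂ) * (2*π*Complex.I) from by
        rw [hs]; push_cast; ring]
      rw [Complex.exp_add, Complex.exp_add, Complex.exp_int_mul_two_pi_mul_I, mul_one]
    rw [hDt]
    apply dirichlet_lb N hN1 s
    calc |s| = circDist t ω := rfl
      _ ≤ r := ht
      _ ≤ 1/(2*N) := hrN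
  -- measurability of the ball
  have hmeasB : MeasurableSet (circBall ω r) := by
    have hmr : Measurable fun t : ℝ => circDist t ω := by
      unfold circDist
      apply Measurable.abs
      apply Measurable.sub
      · exact measurable_id.sub measurable_const
      · have : Measurable fun t : ℝ => round (t - ω) := by
          have : Measurable fun t : ℝ => ⌊(t - ω) + 1/2⌋ :=
            Int.measurable_floor.comp ((measurable_id.sub measurable_const).add
              measurable_const)
          simp_rw [round_eq]
          exact this
        exact measurable_from_top.comp this
    exact hmr measurableSet_Iic
  -- integrability of normSq ∘ D
  have hDcont : Continuous D := by
    rw [hD]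
    apply continuous_finset_sum
    intro n _
    exact continuous_const.mul
      (Complex.continuous_exp.comp (continuous_const.mul Complex.continuous_ofReal))
  have hDnorm : ∀ t, ‖D t‖ ≤ (N:ℝ) := by
    intro t
    rw [hD]
    calc ‖∑ n ∈ Finset.range N, c n * Complex.exp (2*π*Complex.I*n*t)‖
        ≤ ∑ n ∈ Finset.range N, ‖c n * Complex.exp (2*π*Complex.I*n*t)‖ := by
          exact norm_sum_le _ _
      _ = ∑ n ∈ Finset.range N, 1 := by
          apply Finset.sum_congr rfl
          intro n _
          rw [norm_mul, hc]
          rw [Complex.norm_exp, Complex.norm_exp]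
          simp [Complex.mul_re, Complex.mul_im]
      _ = (N:ℝ) := by simp
  have hDint : Integrable (fun t => Complex.normSq (D t)) σ := by
    apply Integrable.mono' (integrable_const ((N:ℝ)^2))
    · exact (Complex.continuous_normSq.comp hDcont).aestronglyMeasurable
    · filter_upwards with t
      rw [Real.norm_eq_abs, abs_of_nonneg (Complex.normSq_nonneg _), ← Complex.sq_norm]
      exact pow_le_pow_left₀ (norm_nonneg _) (hDnorm t) 2
  -- reduce to the part of the ball inside [0,1)
  set B' : Set ℝ := circBall ω r ∩ Set.Ico (0:ℝ) 1 with hB'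
  have hmeasB' : MeasurableSet B' := hmeasB.inter measurableSet_Ico
  have hσB : σ (circBall ω r) = σ B' := by
    have h1 : σ (circBall ω r) ≤ σ B' + σ ((circBall ω r) \ (Set.Ico (0:ℝ) 1)) := by
      rw [hB']
      rw [← measure_inter_add_diff (circBall ω r) measurableSet_Ico]
    have h2 : σ ((circBall ω r) \ (Set.Ico (0:ℝ) 1)) = 0 :=
      measure_mono_null (diff_subset_compl _ _) hsupp
    have h3 : σ B' ≤ σ (circBall ω r) := measure_mono inter_subset_left
    rw [h2, add_zero] at h1
    exact le_antisymm h1 h3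
  -- main estimate
  have hmain : 4*(N:ℝ)^2/π^2 * (σ B').toReal ≤ ∫ t, Complex.normSq (D t) ∂σ := by
    have e1 : ∫ _ in B', (4*(N:ℝ)^2/π^2) ∂σ = 4*(N:ℝ)^2/π^2 * (σ B').toReal := by
      rw [setIntegral_const, smul_eq_mul, measureReal_def]
      ring
    rw [← e1]
    calc ∫ _ in B', (4*(N:ℝ)^2/π^2) ∂σ
        ≤ ∫ t in B', Complex.normSq (D t) ∂σ := by
          apply setIntegral_mono_on (integrableOn_const (measure_ne_top σ B'))
            (hDint.integrableOn) hmeasB'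
          intro t ht
          exact hDlow t (ht.1)
      _ ≤ ∫ t, Complex.normSq (D t) ∂σ :=
          setIntegral_le_integral hDint (ae_of_all σ (fun t => Complex.normSq_nonneg _))
  -- conclude
  have hIσ : (∫ x, ‖∑ n ∈ Finset.range N,
      Complex.exp (-(2 * π * Complex.I * n * ω)) * f (T^[n] x)‖ ^ 2 ∂μ)
      = ∫ t, Complex.normSq (D t) ∂σ := hreal
  rw [hσB, hIσ]
  set I := ∫ t, Complex.normSq (D t) ∂σ with hI
  have hπ0 : (0:ℝ) < π := Real.pi_pos
  have hN0 : (N:ℝ) ≠ 0 := ne_of_gt hNposR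
  have hπ0' : π ≠ 0 := ne_of_gt hπ0
  have heq : (π^2/(4*(N:ℝ))) * ((1/(N:ℝ)) * I) = (π^2/(4*(N:ℝ)^2)) * I := by
    field_simp
  rw [heq]
  calc (σ B').toReal = (π^2/(4*(N:ℝ)^2)) * (4*(N:ℝ)^2/π^2 * (σ B').toReal) := by
        field_simp
      _ ≤ (π^2/(4*(N:ℝ)^2)) * I :=
        mul_le_mul_of_nonneg_left hmain (by positivity)

end
end

section
/- In the lattice approximation setup, let θ ∈ ℂ be nonzero and let e* ∈ ℂ^d satisfy Aᵀ e* = θ e*. Then for all n ≥ 0 and k ≥ 1: if z_{n+1} = z_{n+2} = ⋯ = z_{n+k} = 0, then |⟨ε_n, e*⟩| ≤ |θ|^{−k}·‖e*‖₁·b_L, where ⟨x, y⟩ = Σ_i x_i y_i is the bilinear pairing and ‖·‖₁ the ℓ¹-norm. -/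
open Matrix Polynomial Set

noncomputable section

/-- The error sequence `ε_n = Aⁿ(ω𝟙) − p_n`, where `p_n` is a chosen lattice point. -/
def epsSeq {d : ℕ} (A : Matrix (Fin d) (Fin d) ℤ) (ω : ℝ) (p : ℕ → Fin d → ℝ) (n : ℕ) :
    Fin d → ℝ :=
  ((A.map (Int.cast : ℤ → ℝ)) ^ n) *ᵥ (fun _ => ω) - p n

/-- The lattice-valued sequence `z₀ = −p₀`, `z_n = A p_{n−1} − p_n` (`n ≥ 1`). -/
def zSeq {d : ℕ} (A : Matrix (Fin d) (Fin d) ℤ) (p : ℕ → Fin d → ℝ) : ℕ → Fin d → ℝ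
  | 0 => -p 0
  | (n+1) => (A.map (Int.cast : ℤ → ℝ)) *ᵥ p n - p (n+1)

/-- **Lemma.** In the lattice approximation setup, if `e*` is an eigenvector of `Aᵀ` with
eigenvalue `θ ≠ 0` and `z_{n+1} = ⋯ = z_{n+k} = 0`, then
`|⟨ε_n, e*⟩| ≤ |θ|^{−k} ‖e*‖₁ b_L`. -/
theorem eps_pairing_small_of_zSeq_zero
    (d : ℕ) (hd : 0 < d)
    (A : Matrix (Fin d) (Fin d) ℤ) (hA : IsUnit A.det)
    (L : AddSubgroup (Fin d → ℝ))
    (hspan : Submodule.span ℝ (L : Set (Fin d → ℝ)) = ⊤)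
    (hAL : ∀ v ∈ L, (A.map (Int.cast : ℤ → ℝ)) *ᵥ v ∈ L)
    (bL : ℝ) (hbL : 0 < bL) (hbLcov : ∀ x : Fin d → ℝ, ∃ v ∈ L, ‖x - v‖ ≤ bL)
    (ω : ℝ) (hω : ω ∈ Set.Ioo (0:ℝ) 1)
    (p : ℕ → Fin d → ℝ) (hpL : ∀ n, p n ∈ L)
    (hpnear : ∀ n, ∀ q ∈ L,
      ‖epsSeq A ω p n‖ ≤ ‖((A.map (Int.cast : ℤ → ℝ)) ^ n) *ᵥ (fun _ => ω) - q‖)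
    (θ : ℂ) (hθ : θ ≠ 0)
    (estar : Fin d → ℂ)
    (heig : (A.map (Int.cast : ℤ → ℂ)).transpose *ᵥ estar = θ • estar)
    (n k : ℕ) (hk : 1 ≤ k)
    (hz : ∀ i : ℕ, n + 1 ≤ i → i ≤ n + k → zSeq A p i = 0) :
    ‖∑ i, (epsSeq A ω p n i : ℂ) * estar i‖ ≤
      (‖θ‖)⁻¹ ^ k * (∑ i, ‖estar i‖) * bL := by
  set Aℝ := A.map (Int.cast : ℤ → ℝ) with hAℝ
  -- every ε_m has sup-norm at most bL
  have hεbound : ∀ m, ‖epsSeq A ω p m‖ ≤ bL := by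
    intro m
    obtain ⟨v, hvL, hv⟩ := hbLcov ((Aℝ ^ m) *ᵥ (fun _ => ω))
    exact (hpnear m v hvL).trans hv
  -- recursion: ε_{m+1} = A ε_m + z_{m+1}
  have hstep : ∀ m, epsSeq A ω p (m+1) = Aℝ *ᵥ epsSeq A ω p m + zSeq A p (m+1) := by
    intro m
    simp only [epsSeq, zSeq, Matrix.mulVec_sub]
    rw [pow_succ', Matrix.mulVec_mulVec]
    abel
  -- pairing with estar multiplies by θ under A
  have hpair : ∀ x : Fin d → ℝ,
      ∑ i, ((Aℝ *ᵥ x) i : ℂ) * estar i = θ * ∑ i, (x i : ℂ) * estar i := by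
    intro x
    have h1 : ∀ i, ((Aℝ *ᵥ x) i : ℂ) = ∑ j, ((A i j : ℂ)) * (x j : ℂ) := by
      intro i
      simp only [hAℝ, Matrix.mulVec, dotProduct, Matrix.map_apply]
      push_cast
      ring_nf
    calc ∑ i, ((Aℝ *ᵥ x) i : ℂ) * estar i
        = ∑ i, ∑ j, ((A i j : ℂ) * (x j : ℂ)) * estar i := by
          refine Finset.sum_congr rfl fun i _ => ?_
          rw [h1, Finset.sum_mul]
      _ = ∑ j, (x j : ℂ) * ∑ i, (A i j : ℂ) * estar i := by
          rw [Finset.sum_comm]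
          refine Finset.sum_congr rfl fun j _ => ?_
          rw [Finset.mul_sum]
          refine Finset.sum_congr rfl fun i _ => ?_
          ring
      _ = ∑ j, (x j : ℂ) * (θ * estar j) := by
          refine Finset.sum_congr rfl fun j _ => ?_
          congr 1
          have := congrFun heig j
          simpa [Matrix.mulVec, dotProduct, Matrix.transpose_apply, Matrix.map_apply] using this
      _ = θ * ∑ i, (x i : ℂ) * estar i := by
          rw [Finset.mul_sum]
          refine Finset.sum_congr rfl fun j _ => ?_
          ring
  set S : ℕ → ℂ := fun m => ∑ i, (epsSeq A ω p m i : ℂ) * estar i with hS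
  have hiter : ∀ j, j ≤ k → S (n + j) = θ ^ j * S n := by
    intro j hj
    induction j with
    | zero => simp
    | succ j ih =>
      have hj' : j ≤ k := Nat.le_of_succ_le hj
      have hz0 : zSeq A p (n + j + 1) = 0 := hz (n + j + 1) (by omega) (by omega)
      have hε : epsSeq A ω p (n + (j+1)) = Aℝ *ᵥ epsSeq A ω p (n + j) := by
        have := hstep (n + j)
        rw [hz0, add_zero] at this
        exact this
      have : S (n + (j+1)) = θ * S (n + j) := by
        rw [hS]
        simp only [hε]
        exact hpair _
      rw [this, ih hj', pow_succ]
      ring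
  have hkey : S (n + k) = θ ^ k * S n := hiter k le_rfl
  have habs : ‖S n‖ = (‖θ‖)⁻¹ ^ k * ‖S (n + k)‖ := by
    rw [hkey, norm_mul, norm_pow]
    have hθa : ‖θ‖ ≠ 0 := by simpa using hθ
    rw [← mul_assoc, ← mul_pow, inv_mul_cancel₀ hθa, one_pow, one_mul]
  have hbound : ‖S (n + k)‖ ≤ (∑ i, ‖estar i‖) * bL := by
    calc ‖S (n + k)‖ ≤ ∑ i, ‖(epsSeq A ω p (n+k) i : ℂ) * estar i‖ := by
          exact norm_sum_le _ _
      _ ≤ ∑ i, ‖estar i‖ * bL := by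
          refine Finset.sum_le_sum fun i _ => ?_
          rw [norm_mul, mul_comm]
          refine mul_le_mul_of_nonneg_left ?_ (norm_nonneg _)
          rw [Complex.norm_real]
          exact le_trans (by simpa using norm_le_pi_norm (epsSeq A ω p (n+k)) i)
            (hεbound (n+k))
      _ = (∑ i, ‖estar i‖) * bL := by rw [Finset.sum_mul]
  calc ‖S n‖ = (‖θ‖)⁻¹ ^ k * ‖S (n + k)‖ := habs
    _ ≤ (‖θ‖)⁻¹ ^ k * ((∑ i, ‖estar i‖) * bL) := by
        refine mul_le_mul_of_nonneg_left hbound (by positivity)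
    _ = (‖θ‖)⁻¹ ^ k * (∑ i, ‖estar i‖) * bL := by ring

end
end

section
/- Let Γ be the ℤ-span of vectors x₁,…,x_k ∈ ℝ^d with k ≥ d, and assume Γ is a full-rank lattice in ℝ^d (discrete and spanning ℝ^d over ℝ). Let Γ* = { v ∈ ℝ^d : ⟨v, z⟩ ∈ ℤ for all z ∈ Γ } be the dual lattice, and for u ∈ ℝ^d set ‖u‖_{ℝ^d/Γ*} = min{ ‖u − v‖_∞ : v ∈ Γ* }. Then there exist constants c₁, c₂ > 0 (depending on x₁,…,x_k) such that for every u ∈ ℝ^d: c₁·‖u‖_{ℝ^d/Γ*} ≤ max_{j ≤ k} ‖⟨u, x_j⟩‖_{ℝ/ℤ} ≤ c₂·‖u‖_{ℝ^d/Γ*}. -/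
open Set

noncomputable section

/-- Distance from a real number to the nearest integer: `‖t‖_{ℝ/ℤ}`. -/
def distToInt (t : ℝ) : ℝ := |t - round t|

/-- The dual lattice of the `ℤ`-span `Γ` of the vectors `x j`:
`Γ* = {v : ⟨v, z⟩ ∈ ℤ for all z ∈ Γ}`. -/
def dualLattice {d k : ℕ} (x : Fin k → Fin d → ℝ) : Set (Fin d → ℝ) :=
  {v | ∀ z ∈ AddSubgroup.closure (Set.range x), ∃ m : ℤ, ∑ i, v i * z i = (m : ℝ)}

/-- `ℓ^∞`-distance from `u` to the dual lattice `Γ*`, i.e. `‖u‖_{ℝ^d/Γ*}`. -/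
def distToDual {d k : ℕ} (x : Fin k → Fin d → ℝ) (u : Fin d → ℝ) : ℝ :=
  sInf {t : ℝ | ∃ v ∈ dualLattice x, t = ‖u - v‖}

-- auxiliary lemmas

lemma distToInt_nonneg (t : ℝ) : 0 ≤ distToInt t := abs_nonneg _

lemma distToInt_le_int (t : ℝ) (m : ℤ) : distToInt t ≤ |t - m| := round_le t m

lemma distToInt_sub_int (t : ℝ) (m : ℤ) : distToInt (t - m) = distToInt t := by
  unfold distToInt
  rw [round_sub_intCast]
  congr 1
  push_cast
  ring

lemma abs_le_distToInt {t : ℝ} (h : |t| ≤ 1 / 2) : |t| ≤ distToInt t := by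
  unfold distToInt
  rcases eq_or_ne (round t) 0 with h0 | h0
  · simp [h0]
  · have h1 : (1 : ℝ) ≤ |(round t : ℝ)| := by
      have := Int.one_le_abs h0
      exact_mod_cast this
    have h2 : |(round t : ℝ)| - |t| ≤ |(round t : ℝ) - t| := abs_sub_abs_le_abs_sub _ _
    rw [abs_sub_comm] at h2
    linarith

lemma distToInt_eq_zero {t : ℝ} (h : distToInt t = 0) : ∃ m : ℤ, t = (m : ℝ) :=
  ⟨round t, by have := abs_eq_zero.mp h; linarith⟩

lemma distToInt_le_add (s t : ℝ) : distToInt s ≤ distToInt t + |s - t| := by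
  have h1 : distToInt s ≤ |s - (round t : ℤ)| := round_le s (round t)
  have h2 : s - ((round t : ℤ) : ℝ) = (t - round t) + (s - t) := by push_cast; ring
  calc distToInt s ≤ |s - ((round t : ℤ) : ℝ)| := by exact_mod_cast h1
    _ = |(t - round t) + (s - t)| := by rw [h2]
    _ ≤ |t - round t| + |s - t| := abs_add_le _ _
    _ = distToInt t + |s - t| := rfl

lemma lipschitz_distToInt : LipschitzWith 1 distToInt := by
  apply LipschitzWith.of_dist_le_mul
  intro s t
  rw [Real.dist_eq, Real.dist_eq, NNReal.coe_one, one_mul, abs_sub_le_iff]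
  constructor
  · linarith [distToInt_le_add s t]
  · have := distToInt_le_add t s
    rw [abs_sub_comm t s] at this
    linarith

section dual

variable {d k : ℕ} (x : Fin k → Fin d → ℝ)

lemma mem_dualLattice {v : Fin d → ℝ} :
    v ∈ dualLattice x ↔ ∀ j, ∃ m : ℤ, ∑ i, v i * x j i = (m : ℝ) := by
  constructor
  · intro h j
    exact h _ (AddSubgroup.subset_closure (Set.mem_range_self j))
  · intro h z hz
    induction hz using AddSubgroup.closure_induction with
    | mem z hz => obtain ⟨j, rfl⟩ := hz; exact h j
    | zero => exact ⟨0, by simp⟩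
    | add a b _ _ ha hb =>
        obtain ⟨m, hm⟩ := ha
        obtain ⟨n, hn⟩ := hb
        exact ⟨m + n, by push_cast; simp [Pi.add_apply, mul_add, Finset.sum_add_distrib, hm, hn]⟩
    | neg a _ ha =>
        obtain ⟨m, hm⟩ := ha
        refine ⟨-m, ?_⟩
        push_cast
        simp only [Pi.neg_apply, mul_neg]
        rw [Finset.sum_neg_distrib, hm]

lemma dualLattice_zero : (0 : Fin d → ℝ) ∈ dualLattice x :=
  (mem_dualLattice x).2 fun j => ⟨0, by simp⟩

lemma dualLattice_add {v w : Fin d → ℝ} (hv : v ∈ dualLattice x) (hw : w ∈ dualLattice x) :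
    v + w ∈ dualLattice x := by
  rw [mem_dualLattice] at *
  intro j
  obtain ⟨m, hm⟩ := hv j
  obtain ⟨n, hn⟩ := hw j
  exact ⟨m + n, by push_cast; simp [Pi.add_apply, add_mul, Finset.sum_add_distrib, hm, hn]⟩

lemma dualLattice_neg {v : Fin d → ℝ} (hv : v ∈ dualLattice x) : -v ∈ dualLattice x := by
  rw [mem_dualLattice] at *
  intro j
  obtain ⟨m, hm⟩ := hv j
  refine ⟨-m, ?_⟩
  push_cast
  simp only [Pi.neg_apply, neg_mul]
  rw [Finset.sum_neg_distrib, hm]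

lemma dualLattice_sub {v w : Fin d → ℝ} (hv : v ∈ dualLattice x) (hw : w ∈ dualLattice x) :
    v - w ∈ dualLattice x := by
  rw [sub_eq_add_neg]
  exact dualLattice_add x hv (dualLattice_neg x hw)

lemma dualLattice_sum {ι : Type*} [Fintype ι] (c : ι → ℤ) (w : ι → Fin d → ℝ)
    (hw : ∀ i, w i ∈ dualLattice x) : (∑ i, (c i : ℝ) • w i) ∈ dualLattice x := by
  intro z hz
  have h := fun i => hw i z hz
  choose m hm using h
  refine ⟨∑ i, c i * m i, ?_⟩
  have h1 : ∀ t, (∑ i, (c i : ℝ) • w i) t = ∑ i, (c i : ℝ) * w i t := by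
    intro t; simp [Finset.sum_apply]
  calc ∑ t, (∑ i, (c i : ℝ) • w i) t * z t
      = ∑ t, ∑ i, (c i : ℝ) * (w i t * z t) := by
        refine Finset.sum_congr rfl fun t _ => ?_
        rw [h1, Finset.sum_mul]
        exact Finset.sum_congr rfl fun i _ => by ring
    _ = ∑ i, (c i : ℝ) * ∑ t, w i t * z t := by
        rw [Finset.sum_comm]
        exact Finset.sum_congr rfl fun i _ => by rw [Finset.mul_sum]
    _ = ∑ i, (c i : ℝ) * (m i : ℝ) := by
        exact Finset.sum_congr rfl fun i _ => by rw [hm]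
    _ = ((∑ i, c i * m i : ℤ) : ℝ) := by push_cast; ring

-- distToDual basic facts

lemma distToDual_set_nonempty (u : Fin d → ℝ) :
    {t : ℝ | ∃ v ∈ dualLattice x, t = ‖u - v‖}.Nonempty :=
  ⟨‖u - 0‖, 0, dualLattice_zero x, rfl⟩

lemma distToDual_set_bddBelow (u : Fin d → ℝ) :
    BddBelow {t : ℝ | ∃ v ∈ dualLattice x, t = ‖u - v‖} :=
  ⟨0, by rintro t ⟨v, hv, rfl⟩; exact norm_nonneg _⟩

lemma distToDual_nonneg (u : Fin d → ℝ) : 0 ≤ distToDual x u :=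
  le_csInf (distToDual_set_nonempty x u) (by rintro t ⟨v, hv, rfl⟩; exact norm_nonneg _)

lemma distToDual_le {u v : Fin d → ℝ} (hv : v ∈ dualLattice x) :
    distToDual x u ≤ ‖u - v‖ :=
  csInf_le (distToDual_set_bddBelow x u) ⟨v, hv, rfl⟩

lemma distToDual_exists_lt {u : Fin d → ℝ} {δ : ℝ} (h : distToDual x u < δ) :
    ∃ v ∈ dualLattice x, ‖u - v‖ < δ := by
  obtain ⟨t, ⟨v, hv, rfl⟩, ht⟩ :=
    (csInf_lt_iff (distToDual_set_bddBelow x u) (distToDual_set_nonempty x u)).1 h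
  exact ⟨v, hv, ht⟩

lemma distToDual_sub {u v : Fin d → ℝ} (hv : v ∈ dualLattice x) :
    distToDual x (u - v) = distToDual x u := by
  apply le_antisymm
  · apply le_csInf (distToDual_set_nonempty x u)
    rintro t ⟨w, hw, rfl⟩
    calc distToDual x (u - v) ≤ ‖(u - v) - (w - v)‖ :=
          distToDual_le x (dualLattice_sub x hw hv)
      _ = ‖u - w‖ := by rw [show (u - v) - (w - v) = u - w by abel]
  · apply le_csInf (distToDual_set_nonempty x (u - v))
    rintro t ⟨w, hw, rfl⟩
    calc distToDual x u ≤ ‖u - (w + v)‖ :=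
          distToDual_le x (dualLattice_add x hw hv)
      _ = ‖(u - v) - w‖ := by rw [show u - (w + v) = (u - v) - w by abel]

lemma distToDual_lipschitz (u u' : Fin d → ℝ) :
    distToDual x u ≤ distToDual x u' + ‖u - u'‖ := by
  have h : distToDual x u - ‖u - u'‖ ≤ distToDual x u' := by
    apply le_csInf (distToDual_set_nonempty x u')
    rintro t ⟨v, hv, rfl⟩
    have h1 : distToDual x u ≤ ‖u - v‖ := distToDual_le x hv
    have h2 : ‖u - v‖ ≤ ‖u - u'‖ + ‖u' - v‖ := by
      calc ‖u - v‖ = ‖(u - u') + (u' - v)‖ := by rw [show u - v = (u - u') + (u' - v) by abel]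
        _ ≤ ‖u - u'‖ + ‖u' - v‖ := norm_add_le _ _
    linarith
  linarith

lemma distToDual_continuous : Continuous (distToDual x) := by
  apply LipschitzWith.continuous (K := 1)
  apply LipschitzWith.of_dist_le_mul
  intro u u'
  rw [Real.dist_eq, NNReal.coe_one, one_mul, abs_sub_le_iff, dist_eq_norm]
  constructor
  · linarith [distToDual_lipschitz x u u']
  · have := distToDual_lipschitz x u' u
    rw [show ‖u' - u‖ = ‖u - u'‖ from norm_sub_rev _ _] at this
    linarith

end dual

section pair

/-- The pairing map `u ↦ (⟨u, y i⟩)ᵢ`. -/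
def pairMap {d : ℕ} {ι : Type*} [Fintype ι] (y : ι → Fin d → ℝ) :
    (Fin d → ℝ) →ₗ[ℝ] (ι → ℝ) where
  toFun u := fun i => ∑ t, u t * y i t
  map_add' u v := by
    funext i
    simp [Pi.add_apply, add_mul, Finset.sum_add_distrib]
  map_smul' c u := by
    funext i
    simp [Pi.smul_apply, smul_eq_mul, Finset.mul_sum, mul_assoc]

lemma pairMap_apply {d : ℕ} {ι : Type*} [Fintype ι] (y : ι → Fin d → ℝ) (u : Fin d → ℝ)
    (i : ι) : pairMap y u i = ∑ t, u t * y i t := rfl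

lemma pairMap_ker {d : ℕ} {ι : Type*} [Fintype ι] (y : ι → Fin d → ℝ)
    (hy : Submodule.span ℝ (Set.range y) = ⊤) : LinearMap.ker (pairMap y) = ⊥ := by
  rw [LinearMap.ker_eq_bot']
  intro w hw
  have h1 : ∀ z ∈ Submodule.span ℝ (Set.range y), ∑ t, w t * z t = 0 := by
    intro z hz
    induction hz using Submodule.span_induction with
    | mem z hz =>
        obtain ⟨j, rfl⟩ := hz
        exact congrFun hw j
    | zero => simp
    | add a b _ _ ha hb => simp [Pi.add_apply, mul_add, Finset.sum_add_distrib, ha, hb]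
    | smul c a _ ha =>
        have : ∑ t, w t * (c • a) t = c * ∑ t, w t * a t := by
          rw [Finset.mul_sum]
          exact Finset.sum_congr rfl fun t _ => by
            simp [Pi.smul_apply, smul_eq_mul]; ring
        rw [this, ha, mul_zero]
  have h2 : ∑ t, w t * w t = 0 := h1 w (by rw [hy]; trivial)
  funext i
  have h3 := (Finset.sum_eq_zero_iff_of_nonneg
    (fun i _ => mul_self_nonneg (w i))).1 h2 i (Finset.mem_univ i)
  exact mul_self_eq_zero.mp h3

end pair

section cocompact

lemma exists_cocompact (d k : ℕ) (x : Fin k → Fin d → ℝ)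
    (hspan : Submodule.span ℝ (Set.range x) = ⊤)
    (hdisc : ∃ a : ℝ, 0 < a ∧
      ∀ v ∈ AddSubgroup.closure (Set.range x), v ≠ 0 → a ≤ ‖v‖) :
    ∃ R₀ : ℝ, 0 < R₀ ∧ ∀ u : Fin d → ℝ, ∃ v ∈ dualLattice x, ‖u - v‖ ≤ R₀ := by
  classical
  obtain ⟨a, ha0, ha⟩ := hdisc
  set Γ : Submodule ℤ (Fin d → ℝ) := AddSubgroup.toIntSubmodule (AddSubgroup.closure (Set.range x))
    with hΓdef
  have hΓmem : ∀ z : Fin d → ℝ, z ∈ Γ ↔ z ∈ AddSubgroup.closure (Set.range x) := by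
    intro z
    rw [hΓdef]
    rfl
  haveI hΓdisc : DiscreteTopology Γ := by
    apply discreteTopology_of_isOpen_singleton_zero
    have hset : ({0} : Set Γ) = (Subtype.val : Γ → (Fin d → ℝ)) ⁻¹' (Metric.ball 0 a) := by
      ext ⟨z, hz⟩
      simp only [Set.mem_singleton_iff, Set.mem_preimage, Metric.mem_ball, dist_zero_right]
      constructor
      · intro h
        have hz0 : z = 0 := congrArg Subtype.val h
        rw [hz0]
        simpa using ha0
      · intro h
        by_contra hne
        have hz0 : z ≠ 0 := by
          intro h0
          exact hne (by ext; simp [h0])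
        exact absurd h (not_lt.mpr (ha z ((hΓmem z).1 hz) hz0))
    rw [hset]
    exact Metric.isOpen_ball.preimage continuous_subtype_val
  haveI hΓlat : IsZLattice ℝ Γ := by
    constructor
    rw [← top_le_iff, ← hspan]
    apply Submodule.span_mono
    intro z hz
    exact (hΓmem z).2 (AddSubgroup.subset_closure hz)
  haveI := ZLattice.module_free ℝ Γ
  haveI := ZLattice.module_finite ℝ Γ
  set ι := Module.Free.ChooseBasisIndex ℤ Γ with hι
  set b₀ : Module.Basis ι ℤ Γ := Module.Free.chooseBasis ℤ Γ with hb₀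
  set B : Module.Basis ι ℝ (Fin d → ℝ) := b₀.ofZLatticeBasis ℝ Γ with hB
  -- the pairing map against B is a linear equivalence
  set Φ : (Fin d → ℝ) →ₗ[ℝ] (ι → ℝ) := pairMap ⇑B with hΦ
  have hΦker : LinearMap.ker Φ = ⊥ := pairMap_ker ⇑B B.span_eq
  have hrank : Module.finrank ℝ (Fin d → ℝ) = Module.finrank ℝ (ι → ℝ) := by
    rw [Module.finrank_eq_card_basis B, Module.finrank_pi]
  set E : (Fin d → ℝ) ≃ₗ[ℝ] (ι → ℝ) :=
    LinearMap.linearEquivOfInjective Φ (LinearMap.ker_eq_bot.mp hΦker) hrank with hE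
  have hEapp : ∀ u, E u = Φ u := fun u => rfl
  set bstar : ι → (Fin d → ℝ) := fun i => E.symm (Pi.single i 1) with hbstardef
  have hbstar : ∀ i j, ∑ t, bstar i t * B j t = (Pi.single i 1 : ι → ℝ) j := by
    intro i j
    have h1 : E (bstar i) = Pi.single i 1 := E.apply_symm_apply _
    have h2 : Φ (bstar i) j = (Pi.single i 1 : ι → ℝ) j := by rw [← hEapp, h1]
    simpa [hΦ, pairMap_apply] using h2
  -- each bstar i is in the dual lattice
  have hbstarDL : ∀ i, bstar i ∈ dualLattice x := by
    intro i z hz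
    have hz' : z ∈ Submodule.span ℤ (Set.range ⇑B) := by
      rw [hB, b₀.ofZLatticeBasis_span ℝ]
      exact (hΓmem z).2 hz
    clear hz
    induction hz' using Submodule.span_induction with
    | mem z hzz =>
        obtain ⟨j, rfl⟩ := hzz
        refine ⟨if j = i then 1 else 0, ?_⟩
        rw [hbstar i j, Pi.single_apply]
        by_cases h : j = i <;> simp [h]
    | zero => exact ⟨0, by simp⟩
    | add a b _ _ ha hb =>
        obtain ⟨m, hm⟩ := ha
        obtain ⟨n, hn⟩ := hb
        exact ⟨m + n, by push_cast; simp [Pi.add_apply, mul_add, Finset.sum_add_distrib, hm, hn]⟩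
    | smul c a _ ha =>
        obtain ⟨m, hm⟩ := ha
        refine ⟨c * m, ?_⟩
        have h1 : ∑ t, bstar i t * (c • a) t = (c : ℝ) * ∑ t, bstar i t * a t := by
          rw [Finset.mul_sum]
          refine Finset.sum_congr rfl fun t _ => ?_
          simp only [Pi.smul_apply, zsmul_eq_mul]
          ring
        rw [h1, hm]
        push_cast
        ring
  -- the basis of ℝ^d given by bstar
  set Bstar : Module.Basis ι ℝ (Fin d → ℝ) := (Pi.basisFun ℝ ι).map E.symm with hBstar
  have hBstarApp : ∀ i, Bstar i = bstar i := by
    intro i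
    rw [hBstar, Module.Basis.map_apply, Pi.basisFun_apply]
  refine ⟨1 + ∑ i, ‖bstar i‖, by positivity, fun u => ?_⟩
  set r : ι → ℝ := fun i => Bstar.repr u i with hr
  set v : Fin d → ℝ := ∑ i, ((round (r i) : ℤ) : ℝ) • bstar i with hv
  have hvDL : v ∈ dualLattice x := dualLattice_sum x _ _ hbstarDL
  refine ⟨v, hvDL, ?_⟩
  have hu : ∑ i, r i • bstar i = u := by
    rw [show (fun i => r i • bstar i) = fun i => Bstar.repr u i • Bstar i by
      funext i; rw [hBstarApp]]
    exact Bstar.sum_repr u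
  have hsub : u - v = ∑ i, (r i - round (r i)) • bstar i := by
    rw [← hu, hv, ← Finset.sum_sub_distrib]
    exact Finset.sum_congr rfl fun i _ => by rw [sub_smul]
  calc ‖u - v‖ = ‖∑ i, (r i - round (r i)) • bstar i‖ := by rw [hsub]
    _ ≤ ∑ i, ‖(r i - round (r i)) • bstar i‖ := norm_sum_le _ _
    _ ≤ ∑ i, ‖bstar i‖ := by
        refine Finset.sum_le_sum fun i _ => ?_
        rw [norm_smul, Real.norm_eq_abs]
        have h1 : |r i - round (r i)| ≤ 1 := le_trans (abs_sub_round _) (by norm_num)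
        calc |r i - round (r i)| * ‖bstar i‖ ≤ 1 * ‖bstar i‖ :=
              mul_le_mul_of_nonneg_right h1 (norm_nonneg _)
          _ = ‖bstar i‖ := one_mul _
    _ ≤ 1 + ∑ i, ‖bstar i‖ := by linarith

end cocompact

/-- **Lemma.** If `Γ = ℤ[x₁,…,x_k]` is a full-rank lattice in `ℝ^d` (with `k ≥ d`) and `Γ*`
its dual, then `‖u‖_{ℝ^d/Γ*} ≍ max_{j ≤ k} ‖⟨u, x_j⟩‖_{ℝ/ℤ}`, with implied constants
depending only on the `x_j`. -/
theorem distToDual_comparable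
    (d k : ℕ) (hd : 0 < d) (hk : d ≤ k)
    (x : Fin k → Fin d → ℝ)
    (hspan : Submodule.span ℝ (Set.range x) = ⊤)
    (hdisc : ∃ a : ℝ, 0 < a ∧
      ∀ v ∈ AddSubgroup.closure (Set.range x), v ≠ 0 → a ≤ ‖v‖) :
    ∃ c₁ c₂ : ℝ, 0 < c₁ ∧ 0 < c₂ ∧
      ∀ u : Fin d → ℝ,
        c₁ * distToDual x u ≤ (⨆ j : Fin k, distToInt (∑ i, u i * x j i)) ∧
        (⨆ j : Fin k, distToInt (∑ i, u i * x j i)) ≤ c₂ * distToDual x u := by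
  classical
  haveI : Nonempty (Fin k) := ⟨⟨0, lt_of_lt_of_le hd hk⟩⟩
  set F : (Fin d → ℝ) → ℝ := fun u => ⨆ j : Fin k, distToInt (∑ i, u i * x j i) with hFdef
  have hFbdd : ∀ u : Fin d → ℝ, BddAbove (Set.range fun j : Fin k => distToInt (∑ i, u i * x j i)) :=
    fun u => (Set.finite_range _).bddAbove
  have hFnonneg : ∀ u, 0 ≤ F u := fun u => Real.iSup_nonneg fun j => distToInt_nonneg _
  have hle : ∀ (u : Fin d → ℝ) (j : Fin k), distToInt (∑ i, u i * x j i) ≤ F u := fun u j =>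
    le_ciSup (hFbdd u) j
  have hFle : ∀ (u : Fin d → ℝ) (e : ℝ), (∀ j, distToInt (∑ i, u i * x j i) ≤ e) → F u ≤ e :=
    fun u e h => ciSup_le h
  -- the pairing map and its bounds
  set T := pairMap x with hT
  have hTker := pairMap_ker x hspan
  obtain ⟨C, hC0, hC⟩ := LinearMap.exists_antilipschitzWith T hTker
  have hC0' : (0 : ℝ) < (C : ℝ) := hC0
  have hClb : ∀ w : Fin d → ℝ, ‖w‖ ≤ (C : ℝ) * ‖T w‖ := by
    intro w
    have := hC.le_mul_dist w 0
    simpa [dist_eq_norm, map_zero] using this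
  set c : ℝ := ((C : ℝ))⁻¹ with hc
  have hc0 : 0 < c := inv_pos.mpr hC0'
  have hcC : c * (C : ℝ) = 1 := inv_mul_cancel₀ (ne_of_gt hC0')
  have hcw : ∀ w : Fin d → ℝ, c * ‖w‖ ≤ ‖T w‖ := by
    intro w
    calc c * ‖w‖ ≤ c * ((C : ℝ) * ‖T w‖) := mul_le_mul_of_nonneg_left (hClb w) hc0.le
      _ = ‖T w‖ := by rw [← mul_assoc, hcC, one_mul]
  set T' := LinearMap.toContinuousLinearMap T with hT'
  set M : ℝ := ‖T'‖ + 1 with hMdef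
  have hM0 : 0 < M := by positivity
  have hM : ∀ (w : Fin d → ℝ) (j : Fin k), |∑ i, w i * x j i| ≤ M * ‖w‖ := by
    intro w j
    have h1 : ‖T w j‖ ≤ ‖T w‖ := norm_le_pi_norm (T w) j
    have h2 : ‖T' w‖ ≤ ‖T'‖ * ‖w‖ := T'.le_opNorm w
    have h3 : T' w = T w := rfl
    have h4 : ‖T w j‖ = |∑ i, w i * x j i| := rfl
    rw [h3] at h2
    have h5 : ‖T'‖ * ‖w‖ ≤ M * ‖w‖ :=
      mul_le_mul_of_nonneg_right (by rw [hMdef]; linarith) (norm_nonneg _)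
    rw [← h4]
    linarith
  -- invariance of F under dual lattice translations
  have hFinv : ∀ (u v : Fin d → ℝ), v ∈ dualLattice x → F (u - v) = F u := by
    intro u v hv
    apply iSup_congr
    intro j
    obtain ⟨m, hm⟩ := (mem_dualLattice x).1 hv j
    have h1 : ∑ i, (u - v) i * x j i = (∑ i, u i * x j i) - (m : ℝ) := by
      rw [← hm, ← Finset.sum_sub_distrib]
      exact Finset.sum_congr rfl fun i _ => by simp [Pi.sub_apply, sub_mul]
    rw [h1, distToInt_sub_int]
  -- continuity of F
  have hTcont : ∀ j : Fin k, Continuous fun u : Fin d → ℝ => ∑ i, u i * x j i := fun j =>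
    continuous_finset_sum _ fun i _ => (continuous_apply i).mul continuous_const
  have hFcont : Continuous F := by
    have heq : F = fun u => Finset.univ.sup' Finset.univ_nonempty
        (fun j : Fin k => distToInt (∑ i, u i * x j i)) := by
      funext u
      rw [hFdef]
      exact (Finset.sup'_univ_eq_ciSup _).symm
    rw [heq, continuous_iff_continuousAt]
    intro u
    exact Filter.Tendsto.finset_sup'_nhds_apply Finset.univ_nonempty
      (fun j _ => ((lipschitz_distToInt.continuous.comp (hTcont j)).tendsto u))
  -- cocompactness radius
  obtain ⟨R₀, hR₀, hcc⟩ := exists_cocompact d k x hspan hdisc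
  -- small scale
  set δ : ℝ := (2 * M)⁻¹ with hδ
  have hδ0 : 0 < δ := by positivity
  have hδM : M * δ = 1 / 2 := by
    rw [hδ]
    field_simp
  -- compact minimum
  set K : Set (Fin d → ℝ) := {w | ‖w‖ ≤ R₀ ∧ δ ≤ distToDual x w} with hKdef
  have hKc : IsCompact K := by
    have hclosed : IsClosed K :=
      (isClosed_le continuous_norm continuous_const).inter
        (isClosed_le continuous_const (distToDual_continuous x))
    apply Metric.isCompact_of_isClosed_isBounded hclosed
    apply Bornology.IsBounded.subset (Metric.isBounded_closedBall (x := (0 : Fin d → ℝ)) (r := R₀))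
    intro w hw
    simpa [Metric.mem_closedBall, dist_zero_right] using hw.1
  obtain ⟨ε, hε0, hεle⟩ : ∃ ε : ℝ, 0 < ε ∧ ∀ w ∈ K, ε ≤ F w := by
    by_cases hKne : K.Nonempty
    · obtain ⟨w₀, hw₀K, hw₀min⟩ := hKc.exists_isMinOn hKne hFcont.continuousOn
      refine ⟨F w₀, ?_, fun w hw => isMinOn_iff.mp hw₀min w hw⟩
      rcases (hFnonneg w₀).lt_or_eq with h | h
      · exact h
      · exfalso
        have hw0 : ∀ j : Fin k, distToInt (∑ i, w₀ i * x j i) = 0 := by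
          intro j
          have h1 := hle w₀ j
          rw [← h] at h1
          exact le_antisymm h1 (distToInt_nonneg _)
        have hmem : w₀ ∈ dualLattice x :=
          (mem_dualLattice x).2 fun j => distToInt_eq_zero (hw0 j)
        have hG0 : distToDual x w₀ ≤ 0 := by
          have := distToDual_le x (u := w₀) hmem
          simpa using this
        have := hw₀K.2
        linarith
    · exact ⟨1, one_pos, fun w hw => absurd ⟨w, hw⟩ hKne⟩
  -- the constants
  refine ⟨min c (ε / R₀), M, lt_min hc0 (div_pos hε0 hR₀), hM0, fun u => ?_⟩
  constructor
  · -- lower bound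
    rcases lt_or_ge (distToDual x u) δ with hcase | hcase
    · obtain ⟨v, hv, hvlt⟩ := distToDual_exists_lt x hcase
      have hTwle : ‖T (u - v)‖ ≤ F (u - v) := by
        rw [pi_norm_le_iff_of_nonneg (hFnonneg _)]
        intro j
        have habs : |∑ i, (u - v) i * x j i| ≤ 1 / 2 := by
          have h1 : M * ‖u - v‖ ≤ M * δ := mul_le_mul_of_nonneg_left hvlt.le hM0.le
          have h2 := hM (u - v) j
          rw [hδM] at h1
          exact le_trans h2 h1
        calc ‖T (u - v) j‖ = |∑ i, (u - v) i * x j i| := rfl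
          _ ≤ distToInt (∑ i, (u - v) i * x j i) := abs_le_distToInt habs
          _ ≤ F (u - v) := hle _ j
      have hmain : c * distToDual x u ≤ F u := by
        have h1 : distToDual x u ≤ ‖u - v‖ := distToDual_le x hv
        have h2 : c * ‖u - v‖ ≤ ‖T (u - v)‖ := hcw _
        have h3 := hFinv u v hv
        have h4 : c * distToDual x u ≤ c * ‖u - v‖ := mul_le_mul_of_nonneg_left h1 hc0.le
        linarith
      calc min c (ε / R₀) * distToDual x u ≤ c * distToDual x u :=
            mul_le_mul_of_nonneg_right (min_le_left _ _) (distToDual_nonneg x u)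
        _ ≤ F u := hmain
    · obtain ⟨v, hv, hvle⟩ := hcc u
      have hGeq : distToDual x (u - v) = distToDual x u := distToDual_sub x hv
      have hKmem : (u - v) ∈ K := ⟨hvle, by rw [hGeq]; exact hcase⟩
      have h1 : ε ≤ F (u - v) := hεle _ hKmem
      have h2 : distToDual x u ≤ R₀ := le_trans (distToDual_le x hv) hvle
      have h3 := hFinv u v hv
      calc min c (ε / R₀) * distToDual x u ≤ (ε / R₀) * distToDual x u :=
            mul_le_mul_of_nonneg_right (min_le_right _ _) (distToDual_nonneg x u)
        _ ≤ (ε / R₀) * R₀ := mul_le_mul_of_nonneg_left h2 (div_pos hε0 hR₀).le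
        _ = ε := div_mul_cancel₀ _ (ne_of_gt hR₀)
        _ ≤ F u := by rw [← h3]; exact h1
  · -- upper bound
    have key : ∀ v ∈ dualLattice x, F u ≤ M * ‖u - v‖ := by
      intro v hv
      rw [← hFinv u v hv]
      apply hFle
      intro j
      calc distToInt (∑ i, (u - v) i * x j i)
          ≤ |∑ i, (u - v) i * x j i - ((0 : ℤ) : ℝ)| := distToInt_le_int _ 0
        _ = |∑ i, (u - v) i * x j i| := by norm_num
        _ ≤ M * ‖u - v‖ := hM _ j
    have h1 : F u / M ≤ distToDual x u := by
      apply le_csInf (distToDual_set_nonempty x u)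
      rintro t ⟨v, hv, rfl⟩
      rw [div_le_iff₀ hM0]
      calc F u ≤ M * ‖u - v‖ := key v hv
        _ = ‖u - v‖ * M := mul_comm _ _
    calc F u = F u / M * M := by field_simp
      _ ≤ distToDual x u * M := mul_le_mul_of_nonneg_right h1 hM0.le
      _ = M * distToDual x u := mul_comm _ _

end
end

section
/- Let p(x) = x^d − a_{d−1}x^{d−1} − ⋯ − a₁x − a₀ ∈ ℤ[x] with a₀ ≠ 0 and with d distinct complex roots θ₁,…,θ_d. Let 1 ≤ κ ≤ d be such that |θ_j| < 1 for all j > κ. Let (L_n)_{n≥0} be a sequence of integers satisfying L_{n+d} = Σ_{j=0}^{d−1} a_j L_{n+j} for all n ≥ 0. Let P ∈ ℤ[X] and α ∈ ℂ be such that P(1/θ_j) = α for all 1 ≤ j ≤ κ. Then there exists a sequence of integers (K_n) such that |α·L_n − K_n| → 0 as n → ∞; in particular, if α is real then the distance from α·L_n to the nearest integer tends to 0. -/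
open Polynomial Filter

noncomputable section

/-- **Lemma.** Let `p(x) = x^d − a_{d−1}x^{d−1} − ⋯ − a₀ ∈ ℤ[x]`, `a₀ ≠ 0`, with distinct
complex roots `θ₁,…,θ_d`, of which those beyond the first `κ` lie strictly inside the unit
circle. If `(L_n)` is an integer sequence satisfying the corresponding linear recurrence and
`P ∈ ℤ[X]` takes the common value `α` at `1/θ_j` for all `j ≤ κ`, then `α L_n` converges to
the integers: there are integers `K_n` with `|α L_n − K_n| → 0`; in particular, if `α` is
real, the distance from `α L_n` to the nearest integer tends to `0`. -/
theorem recurrence_fractional_parts_tendsto_zero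
    (d : ℕ) (hd : 1 ≤ d)
    (a : Fin d → ℤ) (ha0 : a ⟨0, hd⟩ ≠ 0)
    (θ : Fin d → ℂ) (hinj : Function.Injective θ)
    (hroot : ∀ j, θ j ^ d = ∑ i : Fin d, (a i : ℂ) * θ j ^ (i : ℕ))
    (κ : ℕ) (hκ1 : 1 ≤ κ) (hκd : κ ≤ d)
    (hsmall : ∀ j : Fin d, κ ≤ (j : ℕ) → ‖θ j‖ < 1)
    (L : ℕ → ℤ)
    (hrec : ∀ n : ℕ, L (n + d) = ∑ j : Fin d, a j * L (n + (j : ℕ)))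
    (P : Polynomial ℤ) (α : ℂ)
    (hP : ∀ j : Fin d, (j : ℕ) < κ → Polynomial.aeval (θ j)⁻¹ P = α) :
    (∃ K : ℕ → ℤ,
      Tendsto (fun n => ‖α * (L n : ℂ) - (K n : ℂ)‖) atTop (nhds 0)) ∧
    (∀ t : ℝ, α = (t : ℂ) →
      Tendsto (fun n => |t * (L n : ℝ) - (round (t * (L n : ℝ)) : ℝ)|) atTop (nhds 0)) := by
  -- roots are nonzero
  have hθ0 : ∀ j, θ j ≠ 0 := by
    intro j hj
    have h := hroot j
    rw [hj, zero_pow (by omega : d ≠ 0)] at h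
    have h2 : ∑ i : Fin d, (a i : ℂ) * (0:ℂ) ^ (i : ℕ) = (a ⟨0, hd⟩ : ℂ) := by
      rw [Finset.sum_eq_single (⟨0, hd⟩ : Fin d)]
      · simp
      · intro i _ hi
        have : (i : ℕ) ≠ 0 := by
          intro h0; apply hi; exact Fin.ext h0
        rw [zero_pow this, mul_zero]
      · simp
    rw [h2] at h
    exact ha0 (by exact_mod_cast h.symm)
  -- existence of coefficients c
  obtain ⟨c, hc⟩ : ∃ c : Fin d → ℂ, ∀ n, (L n : ℂ) = ∑ j : Fin d, c j * θ j ^ n := by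
    set M : Matrix (Fin d) (Fin d) ℂ := (Matrix.vandermonde θ).transpose with hM
    have hdet : IsUnit M.det := by
      rw [Matrix.det_transpose]
      exact isUnit_iff_ne_zero.2 (Matrix.det_vandermonde_ne_zero_iff.2 hinj)
    set c : Fin d → ℂ := M⁻¹.mulVec (fun i : Fin d => (L (i:ℕ) : ℂ)) with hc'
    have hsolve : M.mulVec c = fun i : Fin d => (L (i:ℕ) : ℂ) := by
      rw [hc', Matrix.mulVec_mulVec, Matrix.mul_nonsing_inv M hdet, Matrix.one_mulVec]
    refine ⟨c, ?_⟩
    intro n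
    induction n using Nat.strong_induction_on with
    | _ n ih =>
      rcases lt_or_ge n d with hn | hn
      · have := congrFun hsolve ⟨n, hn⟩
        simp only [Matrix.mulVec, dotProduct, hM, Matrix.transpose_apply,
          Matrix.vandermonde, Matrix.of_apply] at this
        rw [← this]
        exact Finset.sum_congr rfl (fun j _ => mul_comm _ _)
      · obtain ⟨m, rfl⟩ : ∃ m, n = m + d := ⟨n - d, by omega⟩
        have hr := hrec m
        have hcast : (L (m + d) : ℂ) = ∑ j : Fin d, (a j : ℂ) * (L (m + (j : ℕ)) : ℂ) := by
          exact_mod_cast congrArg (Int.cast : ℤ → ℂ) hr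
        rw [hcast]
        have : ∀ j : Fin d, (L (m + (j : ℕ)) : ℂ) = ∑ i : Fin d, c i * θ i ^ (m + (j : ℕ)) := by
          intro j; exact ih _ (by omega)
        calc ∑ j : Fin d, (a j : ℂ) * (L (m + (j : ℕ)) : ℂ)
            = ∑ j : Fin d, ∑ i : Fin d, (a j : ℂ) * (c i * θ i ^ (m + (j : ℕ))) := by
              refine Finset.sum_congr rfl fun j _ => ?_
              rw [this j, Finset.mul_sum]
          _ = ∑ i : Fin d, ∑ j : Fin d, (a j : ℂ) * (c i * θ i ^ (m + (j : ℕ))) :=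
              Finset.sum_comm
          _ = ∑ i : Fin d, c i * θ i ^ (m + d) := by
              refine Finset.sum_congr rfl fun i _ => ?_
              rw [pow_add]
              have : ∑ j : Fin d, (a j : ℂ) * (c i * θ i ^ (m + (j : ℕ)))
                  = c i * θ i ^ m * ∑ j : Fin d, (a j : ℂ) * θ i ^ (j : ℕ) := by
                rw [Finset.mul_sum]
                refine Finset.sum_congr rfl fun j _ => ?_
                rw [pow_add]; ring
              rw [this, ← hroot i]; ring
  -- define the integer sequence K
  set D := P.natDegree with hD
  set K : ℕ → ℤ := fun n => ∑ k ∈ Finset.range (D + 1), P.coeff k * L (n - k) with hK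
  set f : ℕ → ℂ := fun n => α * (L n : ℂ) - (K n : ℂ) with hf
  set g : ℕ → ℂ := fun n => ∑ j ∈ Finset.univ.filter (fun j : Fin d => ¬ ((j : ℕ) < κ)),
      c j * (α * θ j ^ n - ∑ k ∈ Finset.range (D + 1), (P.coeff k : ℂ) * θ j ^ (n - k))
      with hg
  -- g tends to 0
  have hgz : Tendsto g atTop (nhds 0) := by
    rw [hg]
    have : (0 : ℂ) = ∑ j ∈ Finset.univ.filter (fun j : Fin d => ¬ ((j : ℕ) < κ)), 0 := by simp
    rw [this]
    refine tendsto_finset_sum _ (fun j hj => ?_)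
    have hjκ : κ ≤ (j : ℕ) := by
      have := (Finset.mem_filter.1 hj).2; omega
    have hlt : ‖θ j‖ < 1 := by
      exact hsmall j hjκ
    have h1 : Tendsto (fun n => α * θ j ^ n) atTop (nhds 0) := by
      have := (tendsto_pow_atTop_nhds_zero_of_norm_lt_one hlt).const_mul α
      simpa using this
    have h2 : Tendsto (fun n => ∑ k ∈ Finset.range (D + 1),
        (P.coeff k : ℂ) * θ j ^ (n - k)) atTop (nhds 0) := by
      have : (0 : ℂ) = ∑ k ∈ Finset.range (D + 1), 0 := by simp
      rw [this]
      refine tendsto_finset_sum _ (fun k _ => ?_)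
      have hp : Tendsto (fun n => θ j ^ (n - k)) atTop (nhds 0) :=
        (tendsto_pow_atTop_nhds_zero_of_norm_lt_one hlt).comp (tendsto_sub_atTop_nat k)
      simpa using hp.const_mul ((P.coeff k : ℂ))
    have := ((h1.sub h2).const_mul (c j))
    simpa using this
  -- eventual equality of f and g
  have hfg : ∀ n, D ≤ n → f n = g n := by
    intro n hn
    have hLc : (L n : ℂ) = ∑ j : Fin d, c j * θ j ^ n := hc n
    have hKc : (K n : ℂ) = ∑ j : Fin d, ∑ k ∈ Finset.range (D + 1),
        (P.coeff k : ℂ) * (c j * θ j ^ (n - k)) := by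
      rw [hK]
      push_cast
      calc (∑ k ∈ Finset.range (D + 1), (P.coeff k : ℂ) * (L (n - k) : ℂ))
          = ∑ k ∈ Finset.range (D + 1), ∑ j : Fin d,
              (P.coeff k : ℂ) * (c j * θ j ^ (n - k)) := by
            refine Finset.sum_congr rfl fun k _ => ?_
            rw [hc (n - k), Finset.mul_sum]
        _ = _ := Finset.sum_comm
    simp only [hf, hg]
    rw [hLc, hKc, Finset.mul_sum, ← Finset.sum_sub_distrib]
    have key : ∀ j : Fin d,
        α * (c j * θ j ^ n) - ∑ k ∈ Finset.range (D + 1), (P.coeff k : ℂ) * (c j * θ j ^ (n - k))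
        = c j * (α * θ j ^ n - ∑ k ∈ Finset.range (D + 1), (P.coeff k : ℂ) * θ j ^ (n - k)) := by
      intro j
      rw [mul_sub, Finset.mul_sum]
      congr 1
      · ring
      · exact Finset.sum_congr rfl fun k _ => by ring
    rw [Finset.sum_congr rfl (fun j _ => key j)]
    rw [← Finset.sum_filter_add_sum_filter_not Finset.univ (fun j : Fin d => (j : ℕ) < κ)]
    have hzero : ∑ j ∈ Finset.univ.filter (fun j : Fin d => (j : ℕ) < κ),
        c j * (α * θ j ^ n - ∑ k ∈ Finset.range (D + 1), (P.coeff k : ℂ) * θ j ^ (n - k)) = 0 := by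
      refine Finset.sum_eq_zero fun j hj => ?_
      have hjκ : (j : ℕ) < κ := (Finset.mem_filter.1 hj).2
      have hα : α = ∑ k ∈ Finset.range (D + 1), (P.coeff k : ℂ) * ((θ j)⁻¹) ^ k := by
        rw [← hP j hjκ, aeval_eq_sum_range]
        exact Finset.sum_congr rfl fun k _ => by rw [zsmul_eq_mul]
      have : α * θ j ^ n = ∑ k ∈ Finset.range (D + 1), (P.coeff k : ℂ) * θ j ^ (n - k) := by
        rw [hα, Finset.sum_mul]
        refine Finset.sum_congr rfl fun k hk => ?_
        have hkn : k ≤ n := by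
          have := Finset.mem_range.1 hk; omega
        rw [pow_sub₀ (θ j) (hθ0 j) hkn, inv_pow]
        ring
      rw [this, sub_self, mul_zero]
    rw [hzero, zero_add]
  -- f tends to 0
  have hfz : Tendsto f atTop (nhds 0) := by
    refine hgz.congr' ?_
    filter_upwards [eventually_ge_atTop D] with n hn
    exact (hfg n hn).symm
  have habs : Tendsto (fun n => ‖α * (L n : ℂ) - (K n : ℂ)‖) atTop (nhds 0) := by
    simpa [hf] using hfz.norm
  refine ⟨⟨K, habs⟩, ?_⟩
  intro t ht
  refine squeeze_zero (fun n => abs_nonneg _)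
    (fun n => ?_) habs
  have heq : ‖α * (L n : ℂ) - (K n : ℂ)‖ = |t * (L n : ℝ) - (K n : ℝ)| := by
    rw [ht]
    rw [show ((t : ℂ) * (L n : ℂ) - (K n : ℂ)) = ((t * (L n : ℝ) - (K n : ℝ) : ℝ) : ℂ) by
      push_cast; ring]
    rw [Complex.norm_real, Real.norm_eq_abs]
  rw [heq]
  exact round_le (t * (L n : ℝ)) (K n)

end
end

section
/- For every integer m ≥ 1 and every Δ > 0 there exists δ = δ(m, Δ) ∈ (0, 1/2) such that for all non-negative real numbers G₁,…,G_m with Σ_{j=1}^m G_j ≥ Δ and every s₀ ≥ 0, the Lebesgue measure of the set { (x₁,…,x_m) ∈ [0,1]^m : the fractional part of s₀ + Σ_{j=1}^m G_j·cos(2π x_j) lies in [δ, 1−δ] } is at least 1/2. -/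
open MeasureTheory Real Set
open scoped ENNReal

noncomputable section

namespace CosFractAux

lemma sin_quarter {θ : ℝ} (h1 : π/8 ≤ θ) (h2 : θ ≤ 7*π/8) : (1/4 : ℝ) ≤ Real.sin θ := by
  have hπ := Real.pi_gt_three
  have key : ∀ θ' : ℝ, π/8 ≤ θ' → θ' ≤ π/2 → (1/4:ℝ) ≤ Real.sin θ' := by
    intro θ' h1' h2'
    have hmono : Real.sin (3/8) ≤ Real.sin θ' := by
      apply Real.strictMonoOn_sin.monotoneOn ⟨by linarith, by linarith⟩
        ⟨by linarith, h2'⟩ (by linarith)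
    have hcube := Real.sin_gt_sub_cube (by norm_num : (0:ℝ) < 3/8)
    nlinarith
  rcases le_total θ (π/2) with h | h
  · exact key θ h1 h
  · have := key (π - θ) (by linarith) (by linarith)
    rwa [Real.sin_pi_sub] at this

lemma expand_aux {s t : ℝ} (hsin : (1/4:ℝ) ≤ |Real.sin (π*(s+t))|) (hd : |s - t| ≤ 1/2) :
    |s - t| ≤ |Real.cos (2*π*s) - Real.cos (2*π*t)| := by
  have e1 : (2*π*s + 2*π*t)/2 = π*(s+t) := by ring
  have e2 : (2*π*s - 2*π*t)/2 = π*(s-t) := by ring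
  have hid : Real.cos (2*π*s) - Real.cos (2*π*t)
      = -2 * Real.sin (π*(s+t)) * Real.sin (π*(s-t)) := by
    rw [Real.cos_sub_cos, e1, e2]
  have habs : |Real.cos (2*π*s) - Real.cos (2*π*t)|
      = 2 * |Real.sin (π*(s+t))| * |Real.sin (π*(s-t))| := by
    rw [hid, abs_mul, abs_mul]
    norm_num
  have hπ := Real.pi_pos
  have hjord : 2*|s - t| ≤ |Real.sin (π*(s-t))| := by
    have habs2 : Real.sin (π*|s-t|) ≤ |Real.sin (π*(s-t))| := by
      rcases abs_cases (s - t) with ⟨h, _⟩ | ⟨h, _⟩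
      · rw [h]; exact le_abs_self _
      · rw [h, mul_neg, Real.sin_neg]
        exact neg_le_abs _
    have hj : 2/π * (π*|s-t|) ≤ Real.sin (π*|s-t|) := by
      apply Real.mul_le_sin (by positivity)
      rw [mul_comm]
      calc |s-t| * π ≤ (1/2) * π := by nlinarith [abs_nonneg (s-t)]
        _ = π/2 := by ring
    have heq : 2/π * (π*|s-t|) = 2*|s-t| := by field_simp
    linarith
  rw [habs]
  nlinarith [abs_nonneg (Real.sin (π*(s+t))), abs_nonneg (s-t)]

lemma vol_le_of_diam {E : Set ℝ} {r : ℝ} (h : ∀ s ∈ E, ∀ t ∈ E, |s - t| ≤ r) :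
    volume E ≤ ENNReal.ofReal (2*r) := by
  rcases E.eq_empty_or_nonempty with rfl | ⟨t₀, ht₀⟩
  · simp
  · have hsub : E ⊆ Icc (t₀ - r) (t₀ + r) := by
      intro s hs
      have := h s hs t₀ ht₀
      rw [abs_le] at this
      exact ⟨by linarith [this.1], by linarith [this.2]⟩
    calc volume E ≤ volume (Icc (t₀ - r) (t₀ + r)) := measure_mono hsub
      _ = ENNReal.ofReal (2*r) := by rw [Real.volume_Icc]; congr 1; ring

lemma expand_piece {a b : ℝ} (hab : b - a ≤ 1/2)
    (hsin : ∀ s ∈ Icc a b, ∀ t ∈ Icc a b, (1/4:ℝ) ≤ |Real.sin (π*(s+t))|) :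
    ∀ s ∈ Icc a b, ∀ t ∈ Icc a b, |s - t| ≤ |Real.cos (2*π*s) - Real.cos (2*π*t)| := by
  intro s hs t ht
  apply expand_aux (hsin s hs t ht)
  rw [abs_le]
  exact ⟨by linarith [hs.1, ht.2], by linarith [hs.2, ht.1]⟩

lemma expand₁ : ∀ s ∈ Icc (1/16:ℝ) (7/16), ∀ t ∈ Icc (1/16:ℝ) (7/16),
    |s - t| ≤ |Real.cos (2*π*s) - Real.cos (2*π*t)| := by
  apply expand_piece (by norm_num)
  intro s hs t ht
  have hπ := Real.pi_pos
  have h : (1/4:ℝ) ≤ Real.sin (π*(s+t)) := by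
    apply sin_quarter
    · nlinarith [hs.1, ht.1]
    · nlinarith [hs.2, ht.2]
  exact h.trans (le_abs_self _)

lemma expand₂ : ∀ s ∈ Icc (9/16:ℝ) (15/16), ∀ t ∈ Icc (9/16:ℝ) (15/16),
    |s - t| ≤ |Real.cos (2*π*s) - Real.cos (2*π*t)| := by
  apply expand_piece (by norm_num)
  intro s hs t ht
  have hπ := Real.pi_pos
  have h1 : (1/4:ℝ) ≤ Real.sin (π*(s+t-1)) := by
    apply sin_quarter
    · nlinarith [hs.1, ht.1]
    · nlinarith [hs.2, ht.2]
  have h2 : Real.sin (π*(s+t-1)) = -Real.sin (π*(s+t)) := by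
    have e : π*(s+t-1) = π*(s+t) - π := by ring
    rw [e, Real.sin_sub_pi]
  calc (1/4:ℝ) ≤ -Real.sin (π*(s+t)) := by rw [← h2]; exact h1
    _ ≤ |Real.sin (π*(s+t))| := neg_le_abs _

lemma E_bound {g c δ : ℝ} (hg : 0 < g) (hδ0 : 0 < δ) {a b : ℝ}
    (hK : ∀ s ∈ Icc a b, ∀ t ∈ Icc a b, |s-t| ≤ |Real.cos (2*π*s) - Real.cos (2*π*t)|)
    (n : ℤ) :
    volume {t : ℝ | t ∈ Icc a b ∧ |c + g * Real.cos (2*π*t) - n| < δ}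
      ≤ ENNReal.ofReal (4*δ/g) := by
  have h2 : (4:ℝ)*δ/g = 2*(2*δ/g) := by ring
  rw [h2]
  apply vol_le_of_diam
  rintro s ⟨hsK, hsδ⟩ t ⟨htK, htδ⟩
  have hexp := hK s hsK t htK
  have hft : |(c + g * Real.cos (2*π*s)) - (c + g * Real.cos (2*π*t))| < 2*δ := by
    have e : (c + g * Real.cos (2*π*s)) - (c + g * Real.cos (2*π*t))
        = (c + g * Real.cos (2*π*s) - n) - (c + g * Real.cos (2*π*t) - n) := by ring
    rw [e]
    calc |(c + g * Real.cos (2*π*s) - n) - (c + g * Real.cos (2*π*t) - n)|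
        ≤ |c + g * Real.cos (2*π*s) - n| + |c + g * Real.cos (2*π*t) - n| := abs_sub _ _
      _ < 2*δ := by linarith
  have hgm : (c + g * Real.cos (2*π*s)) - (c + g * Real.cos (2*π*t))
      = g * (Real.cos (2*π*s) - Real.cos (2*π*t)) := by ring
  rw [hgm, abs_mul, abs_of_pos hg] at hft
  rw [le_div_iff₀ hg]
  nlinarith

lemma oneD (g c δ : ℝ) (hδ0 : 0 < δ) (h1 : δ ≤ 1/128) (h2 : 192 * δ ≤ g) :
    (1/2 : ℝ≥0∞) ≤ volume {t : ℝ | t ∈ Icc (0:ℝ) 1 ∧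
      Int.fract (c + g * Real.cos (2*π*t)) ∈ Icc δ (1-δ)} := by
  have hg : 0 < g := by linarith
  set f : ℝ → ℝ := fun t => c + g * Real.cos (2*π*t) with hf
  set B : Set ℝ := {t | t ∈ Icc (0:ℝ) 1 ∧ ∃ n : ℤ, |f t - n| < δ} with hB
  have hsub : Icc (0:ℝ) 1 \ B ⊆ {t : ℝ | t ∈ Icc (0:ℝ) 1 ∧
      Int.fract (c + g * Real.cos (2*π*t)) ∈ Icc δ (1-δ)} := by
    rintro t ⟨htI, htB⟩
    refine ⟨htI, ?_⟩
    have hno : ∀ n : ℤ, δ ≤ |f t - n| := by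
      intro n
      by_contra hlt
      exact htB ⟨htI, n, by linarith [not_le.mp hlt]⟩
    have hfr : Int.fract (f t) = f t - ⌊f t⌋ := rfl
    have hfr0 := Int.fract_nonneg (f t)
    have hfr1 := Int.fract_lt_one (f t)
    constructor
    · have := hno ⌊f t⌋
      rwa [← hfr, abs_of_nonneg hfr0] at this
    · have := hno (⌊f t⌋ + 1)
      have heq : f t - ((⌊f t⌋ + 1 : ℤ) : ℝ) = Int.fract (f t) - 1 := by
        push_cast
        rw [hfr]; ring
      rw [heq, abs_of_nonpos (by linarith)] at this
      linarith
  set N : Finset ℤ := Finset.Icc ⌈c - g - 1⌉ ⌊c + g + 1⌋ with hN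
  have hcover : B ⊆ (Icc (0:ℝ) (1/16) ∪ Icc (7/16:ℝ) (9/16) ∪ Icc (15/16:ℝ) 1) ∪
      ⋃ n ∈ N, ({t : ℝ | t ∈ Icc (1/16:ℝ) (7/16) ∧ |f t - n| < δ} ∪
                {t : ℝ | t ∈ Icc (9/16:ℝ) (15/16) ∧ |f t - n| < δ}) := by
    rintro t ⟨⟨ht0, ht1⟩, n, hn⟩
    have hnN : n ∈ N := by
      have hcos : |Real.cos (2*π*t)| ≤ 1 := Real.abs_cos_le_one _
      have hfc : |f t - c| ≤ g := by
        have e : f t - c = g * Real.cos (2*π*t) := by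
          show c + g * Real.cos (2*π*t) - c = g * Real.cos (2*π*t); ring
        rw [e, abs_mul, abs_of_pos hg]
        nlinarith
      have hnc : |(n:ℝ) - c| ≤ g + 1 := by
        have e : (n:ℝ) - c = -(f t - n) + (f t - c) := by ring
        rw [e]
        calc |(-(f t - n)) + (f t - c)| ≤ |(-(f t - n))| + |f t - c| := abs_add_le _ _
          _ = |f t - n| + |f t - c| := by rw [abs_neg]
          _ ≤ g + 1 := by linarith
      rw [abs_le] at hnc
      rw [hN, Finset.mem_Icc]
      constructor
      · rw [Int.ceil_le]; linarith [hnc.1]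
      · rw [Int.le_floor]; linarith [hnc.2]
    by_cases hA : t ≤ 1/16
    · exact Or.inl (Or.inl (Or.inl ⟨ht0, hA⟩))
    by_cases hBc : t ≤ 7/16
    · exact Or.inr (Set.mem_biUnion hnN (Or.inl ⟨⟨by linarith, hBc⟩, hn⟩))
    by_cases hC : t ≤ 9/16
    · exact Or.inl (Or.inl (Or.inr ⟨by linarith, hC⟩))
    by_cases hD : t ≤ 15/16
    · exact Or.inr (Set.mem_biUnion hnN (Or.inr ⟨⟨by linarith, hD⟩, hn⟩))
    · exact Or.inl (Or.inr ⟨by linarith, ht1⟩)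
  have hcard : (N.card : ℝ) ≤ 2*g + 3 := by
    rw [hN, Int.card_Icc]
    set z : ℤ := ⌊c + g + 1⌋ + 1 - ⌈c - g - 1⌉ with hz
    have hzle : (z : ℝ) ≤ 2*g + 3 := by
      have h1' := Int.floor_le (c + g + 1)
      have h2' := Int.le_ceil (c - g - 1)
      rw [hz]
      push_cast
      linarith
    rcases le_or_gt z 0 with h | h
    · rw [Int.toNat_of_nonpos h]
      norm_num
      linarith
    · have e : ((z.toNat : ℕ) : ℝ) = ((z : ℝ)) := by
        rw [← Int.cast_natCast, Int.toNat_of_nonneg h.le]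
      rw [e]
      exact hzle
  have hFvol : volume (Icc (0:ℝ) (1/16) ∪ Icc (7/16:ℝ) (9/16) ∪ Icc (15/16:ℝ) 1)
      ≤ ENNReal.ofReal (1/4) := by
    refine le_trans (measure_union_le _ _) ?_
    refine le_trans (add_le_add_left (measure_union_le _ _) _) ?_
    rw [Real.volume_Icc, Real.volume_Icc, Real.volume_Icc,
      ← ENNReal.ofReal_add (by norm_num) (by norm_num),
      ← ENNReal.ofReal_add (by norm_num) (by norm_num)]
    apply ENNReal.ofReal_le_ofReal
    norm_num
  have hEvol : ∀ n ∈ N, volume ({t : ℝ | t ∈ Icc (1/16:ℝ) (7/16) ∧ |f t - n| < δ} ∪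
      {t : ℝ | t ∈ Icc (9/16:ℝ) (15/16) ∧ |f t - n| < δ}) ≤ ENNReal.ofReal (8*δ/g) := by
    intro n _
    refine le_trans (measure_union_le _ _) ?_
    have b1 := E_bound hg hδ0 expand₁ n (c := c)
    have b2 := E_bound hg hδ0 expand₂ n (c := c)
    calc volume {t : ℝ | t ∈ Icc (1/16:ℝ) (7/16) ∧ |f t - n| < δ}
          + volume {t : ℝ | t ∈ Icc (9/16:ℝ) (15/16) ∧ |f t - n| < δ}
        ≤ ENNReal.ofReal (4*δ/g) + ENNReal.ofReal (4*δ/g) := add_le_add b1 b2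
      _ = ENNReal.ofReal (8*δ/g) := by
          rw [← ENNReal.ofReal_add (by positivity) (by positivity)]
          congr 1
          ring
  have hBvol : volume B ≤ ENNReal.ofReal (1/2) := by
    calc volume B ≤ volume ((Icc (0:ℝ) (1/16) ∪ Icc (7/16:ℝ) (9/16) ∪ Icc (15/16:ℝ) 1)) +
        volume (⋃ n ∈ N, ({t : ℝ | t ∈ Icc (1/16:ℝ) (7/16) ∧ |f t - n| < δ} ∪
                {t : ℝ | t ∈ Icc (9/16:ℝ) (15/16) ∧ |f t - n| < δ})) :=
          le_trans (measure_mono hcover) (measure_union_le _ _)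
      _ ≤ ENNReal.ofReal (1/4) + ∑ n ∈ N, volume
            ({t : ℝ | t ∈ Icc (1/16:ℝ) (7/16) ∧ |f t - n| < δ} ∪
             {t : ℝ | t ∈ Icc (9/16:ℝ) (15/16) ∧ |f t - n| < δ}) :=
          add_le_add hFvol (measure_biUnion_finset_le N _)
      _ ≤ ENNReal.ofReal (1/4) + ∑ _n ∈ N, ENNReal.ofReal (8*δ/g) :=
          add_le_add_right (Finset.sum_le_sum hEvol) _
      _ = ENNReal.ofReal (1/4) + (N.card : ℝ≥0∞) * ENNReal.ofReal (8*δ/g) := by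
          rw [Finset.sum_const, nsmul_eq_mul]
      _ ≤ ENNReal.ofReal (1/4) + ENNReal.ofReal (2*g+3) * ENNReal.ofReal (8*δ/g) := by
          gcongr
          rw [← ENNReal.ofReal_natCast]
          exact ENNReal.ofReal_le_ofReal hcard
      _ = ENNReal.ofReal (1/4 + (2*g+3)*(8*δ/g)) := by
          rw [← ENNReal.ofReal_mul (by positivity),
            ← ENNReal.ofReal_add (by norm_num) (by positivity)]
      _ ≤ ENNReal.ofReal (1/2) := by
          apply ENNReal.ofReal_le_ofReal
          have hexp : (2*g+3)*(8*δ/g) = 16*δ + 24*δ/g := by field_simp; ring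
          have h24 : 24*δ/g ≤ 1/8 := by rw [div_le_iff₀ hg]; nlinarith
          linarith
  have hhalf : ENNReal.ofReal (1/2 : ℝ) = (1/2 : ℝ≥0∞) := by
    rw [ENNReal.ofReal_div_of_pos (by norm_num)]
    norm_num
  have hB2 : volume B ≤ (1/2 : ℝ≥0∞) := by rw [← hhalf]; exact hBvol
  have hIcc : volume (Icc (0:ℝ) 1) = 1 := by
    rw [Real.volume_Icc]; norm_num
  calc (1/2 : ℝ≥0∞) ≤ volume (Icc (0:ℝ) 1) - volume B := by
        apply ENNReal.le_sub_of_add_le_right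
          (ne_top_of_le_ne_top (by norm_num : (1/2:ℝ≥0∞) ≠ ⊤) hB2)
        rw [hIcc]
        calc (1/2 : ℝ≥0∞) + volume B ≤ 1/2 + 1/2 := by gcongr
          _ = 1 := ENNReal.add_halves 1
    _ ≤ volume (Icc (0:ℝ) 1 \ B) := le_measure_diff
    _ ≤ _ := measure_mono hsub

end CosFractAux

open CosFractAux in
/-- **Theorem.** For every `m ≥ 1` and `Δ > 0` there is an effective `δ ∈ (0, 1/2)` such that
for all non-negative `G₁,…,G_m` with `Σ G_j ≥ Δ` and every `s₀ ≥ 0`, the set of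
`x ∈ [0,1]^m` for which the fractional part of `s₀ + Σ_j G_j cos(2π x_j)` lies in
`[δ, 1−δ]` has Lebesgue measure at least `1/2`. -/
theorem cosine_sum_fract_in_middle
    (m : ℕ) (hm : 1 ≤ m) (Δ : ℝ) (hΔ : 0 < Δ) :
    ∃ δ : ℝ, δ ∈ Set.Ioo (0:ℝ) (1/2) ∧
      ∀ G : Fin m → ℝ, (∀ j, 0 ≤ G j) → Δ ≤ ∑ j, G j →
        ∀ s₀ : ℝ, 0 ≤ s₀ →
          (1/2 : ℝ) ≤ (volume {x : Fin m → ℝ |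
              (∀ j, x j ∈ Set.Icc (0:ℝ) 1) ∧
              Int.fract (s₀ + ∑ j, G j * Real.cos (2 * π * x j)) ∈
                Set.Icc δ (1 - δ)}).toReal := by
  obtain ⟨n, rfl⟩ : ∃ n, m = n + 1 := ⟨m - 1, by omega⟩
  set δ : ℝ := min (1/128) (Δ/(192*(n+1))) with hδdef
  have hδ0 : 0 < δ := lt_min (by norm_num) (by positivity)
  have hδ1 : δ ≤ 1/128 := min_le_left _ _
  refine ⟨δ, ⟨hδ0, by linarith⟩, ?_⟩
  intro G hG hsum s₀ hs₀
  -- pick the index with the largest coefficient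
  obtain ⟨i, -, hi⟩ := Finset.exists_max_image Finset.univ G ⟨0, Finset.mem_univ 0⟩
  have hgi : Δ/(n+1) ≤ G i := by
    rw [div_le_iff₀ (by positivity)]
    have hsle : ∑ j, G j ≤ (n+1) * G i := by
      calc ∑ j, G j ≤ ∑ _j : Fin (n+1), G i :=
            Finset.sum_le_sum fun j _ => hi j (Finset.mem_univ j)
        _ = (n+1) * G i := by
            rw [Finset.sum_const, Finset.card_univ, Fintype.card_fin, nsmul_eq_mul]
            push_cast; ring
    linarith
  have h192 : 192 * δ ≤ G i := by
    have : 192 * δ ≤ 192 * (Δ/(192*(n+1))) := by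
      have := min_le_right (1/128 : ℝ) (Δ/(192*(n+1)))
      nlinarith
    have heq : (192:ℝ) * (Δ/(192*(n+1))) = Δ/(n+1) := by
      field_simp
    linarith [heq ▸ this, hgi]
  set S : Set (Fin (n+1) → ℝ) := {x : Fin (n+1) → ℝ |
      (∀ j, x j ∈ Set.Icc (0:ℝ) 1) ∧
      Int.fract (s₀ + ∑ j, G j * Real.cos (2 * π * x j)) ∈ Set.Icc δ (1 - δ)} with hSdef
  have hS : MeasurableSet S := by
    have h1 : MeasurableSet {x : Fin (n+1) → ℝ | ∀ j, x j ∈ Set.Icc (0:ℝ) 1} := by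
      have e : {x : Fin (n+1) → ℝ | ∀ j, x j ∈ Set.Icc (0:ℝ) 1}
          = Set.pi Set.univ (fun _ => Set.Icc (0:ℝ) 1) := by
        ext x; simp only [Set.mem_setOf_eq, Set.mem_univ_pi]
      rw [e]
      exact MeasurableSet.univ_pi fun _ => measurableSet_Icc
    have h2 : Measurable fun x : Fin (n+1) → ℝ =>
        Int.fract (s₀ + ∑ j, G j * Real.cos (2 * π * x j)) := by
      apply Measurable.fract
      apply Measurable.add measurable_const
      apply Finset.measurable_sum
      intro j _
      exact (measurable_const.mul
        (Real.continuous_cos.measurable.comp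
          ((continuous_const.mul (continuous_apply j)).measurable)))
    exact h1.inter (h2 measurableSet_Icc)
  -- split off coordinate i
  have hmp := MeasureTheory.volume_preserving_piFinSuccAbove (fun _ : Fin (n+1) => ℝ) i
  set e := MeasurableEquiv.piFinSuccAbove (fun _ : Fin (n+1) => ℝ) i with he
  have hvolS : volume S = (volume : Measure (ℝ × (Fin n → ℝ))) (e.symm ⁻¹' S) := by
    rw [(hmp.symm e).measure_preimage hS.nullMeasurableSet]
  have hTm : MeasurableSet (e.symm ⁻¹' S) := e.symm.measurable hS
  have hkey : (1/2 : ℝ≥0∞) ≤ volume S := by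
    rw [hvolS, Measure.volume_eq_prod, Measure.prod_apply_symm hTm]
    have hslice : ∀ y : Fin n → ℝ, (∀ j, y j ∈ Set.Icc (0:ℝ) 1) →
        (1/2 : ℝ≥0∞) ≤ volume ((fun t => (t, y)) ⁻¹' (e.symm ⁻¹' S)) := by
      intro y hy
      set c : ℝ := s₀ + ∑ j, G (i.succAbove j) * Real.cos (2 * π * y j) with hc
      refine le_trans (oneD (G i) c δ hδ0 hδ1 h192) (measure_mono ?_)
      rintro t ⟨htI, hfr⟩
      simp only [Set.mem_preimage, he, MeasurableEquiv.piFinSuccAbove_symm_apply]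
      constructor
      · rw [Fin.forall_iff_succAbove i]
        constructor
        · simpa [Fin.insertNthEquiv] using htI
        · intro j
          simpa [Fin.insertNthEquiv] using hy j
      · rw [Fin.sum_univ_succAbove _ i]
        simp only [Fin.insertNthEquiv, Equiv.coe_fn_mk, Fin.insertNth_apply_same,
          Fin.insertNth_apply_succAbove]
        have e2 : s₀ + (G i * Real.cos (2 * π * t)
            + ∑ j, G (i.succAbove j) * Real.cos (2 * π * y j))
            = c + G i * Real.cos (2 * π * t) := by rw [hc]; ring
        rw [e2]
        exact hfr
    set cube : Set (Fin n → ℝ) := Set.pi Set.univ (fun _ => Set.Icc (0:ℝ) 1) with hcube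
    have hcubem : MeasurableSet cube := MeasurableSet.univ_pi fun _ => measurableSet_Icc
    have hcubevol : volume cube = 1 := by
      rw [hcube, volume_pi_pi]
      simp [Real.volume_Icc]
    calc (1/2 : ℝ≥0∞) = 1/2 * volume cube := by rw [hcubevol, mul_one]
      _ = ∫⁻ y, cube.indicator (fun _ => (1/2 : ℝ≥0∞)) y := by
          rw [lintegral_indicator hcubem]
          simp [mul_comm]
      _ ≤ ∫⁻ y, volume ((fun t => (t, y)) ⁻¹' (e.symm ⁻¹' S)) := by
          apply lintegral_mono
          intro y
          by_cases hy : y ∈ cube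
          · rw [Set.indicator_of_mem hy]
            exact hslice y (Set.mem_univ_pi.mp hy)
          · rw [Set.indicator_of_notMem hy]
            exact zero_le
  -- pass to toReal
  have hfin : volume S ≠ ⊤ := by
    have hsub : S ⊆ Set.pi Set.univ (fun _ : Fin (n+1) => Set.Icc (0:ℝ) 1) := by
      intro x hx
      rw [Set.mem_pi]
      intro j _
      exact hx.1 j
    have : volume S ≤ 1 := by
      refine le_trans (measure_mono hsub) ?_
      rw [volume_pi_pi]
      simp [Real.volume_Icc]
    exact ne_top_of_le_ne_top (by norm_num) this
  have := (ENNReal.toReal_le_toReal (by norm_num) hfin).mpr hkey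
  calc (1/2 : ℝ) = (1/2 : ℝ≥0∞).toReal := by norm_num
    _ ≤ _ := this

end
end

section
/- Let α be a Salem number of degree d = 2m+2 with m ≥ 1, so that the Galois conjugates of α are α^{−1} and m pairs e^{±2πiθ_j} (j = 1,…,m) on the unit circle, and let σ_j : ℚ(α) → ℂ be the field embedding with σ_j(α) = e^{2πiθ_j}. If ω ∈ ℚ(α) is irrational, then σ_j(ω) ≠ ω for some j ∈ {1,…,m}. -/
open Polynomial IntermediateField

noncomputable section

/-- A Salem number: a real algebraic integer `α > 1` all of whose conjugates other than `α`
itself have modulus at most `1`, with at least one conjugate of modulus exactly `1`. -/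
def IsSalem (α : ℝ) : Prop :=
  1 < α ∧ IsIntegral ℤ α ∧
  (∀ z : ℂ, ((minpoly ℚ α).map (algebraMap ℚ ℂ)).IsRoot z → z ≠ (α : ℂ) →
    ‖z‖ ≤ 1) ∧
  (∃ z : ℂ, ((minpoly ℚ α).map (algebraMap ℚ ℂ)).IsRoot z ∧ ‖z‖ = 1)

/-- Sum over the complex roots of the minimal polynomial (a "trace") is rational. -/
lemma trace_aux (α : ℝ) (hα : IsIntegral ℚ α) (q : ℚ[X]) :
    ∃ r : ℚ, (((minpoly ℚ α).aroots ℂ).map (fun t => Polynomial.aeval t q)).sum = (r : ℂ) := by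
  classical
  haveI : FiniteDimensional ℚ ℚ⟮α⟯ := IntermediateField.adjoin.finiteDimensional hα
  set gen := IntermediateField.AdjoinSimple.gen ℚ α with hgen
  set x : ℚ⟮α⟯ := Polynomial.aeval gen q with hx
  refine ⟨Algebra.trace ℚ ℚ⟮α⟯ x, ?_⟩
  have h := trace_eq_sum_embeddings (K := ℚ) (L := ℚ⟮α⟯) (E := ℂ) (x := x)
  have halg : algebraMap ℚ ℂ (Algebra.trace ℚ ℚ⟮α⟯ x) = ((Algebra.trace ℚ ℚ⟮α⟯ x : ℚ) : ℂ) := by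
    simp [eq_ratCast]
  rw [halg] at h
  rw [h]
  let pb := IntermediateField.adjoin.powerBasis hα
  have hsum : ∑ σ : ℚ⟮α⟯ →ₐ[ℚ] ℂ, σ x
      = ∑ y : { y : ℂ // y ∈ (minpoly ℚ pb.gen).aroots ℂ }, Polynomial.aeval (y : ℂ) q := by
    refine Fintype.sum_equiv pb.liftEquiv' _ _ fun σ => ?_
    rw [PowerBasis.liftEquiv'_apply_coe]
    have : pb.gen = gen := IntermediateField.adjoin.powerBasis_gen hα
    rw [hx, ← this]
    exact (Polynomial.aeval_algHom_apply σ pb.gen q).symm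
  rw [hsum]
  have hmp : minpoly ℚ pb.gen = minpoly ℚ α := by
    rw [IntermediateField.adjoin.powerBasis_gen hα]
    exact IntermediateField.minpoly_gen ℚ α
  rw [hmp]
  have hnodup : ((minpoly ℚ α).aroots ℂ).Nodup :=
    Polynomial.nodup_roots ((Polynomial.separable_map _).mpr (minpoly.irreducible hα).separable)
  rw [Finset.sum_mem_multiset _ _ (fun t => Polynomial.aeval t q) (fun y => rfl),
    Finset.sum_eq_multiset_sum, Multiset.toFinset_val, Multiset.dedup_eq_self.mpr hnodup]

lemma aeval_conj_aux (p : ℚ[X]) (y : ℂ) :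
    Polynomial.aeval ((starRingEnd ℂ) y) p = (starRingEnd ℂ) (Polynomial.aeval y p) := by
  rw [Polynomial.aeval_def, Polynomial.aeval_def, Polynomial.hom_eval₂]
  congr 1
  ext r
  simp

/-- **Lemma.** Let `α` be a Salem number of degree `d = 2m+2`, with conjugates `α⁻¹` and the
pairs `z_j, conj z_j` (`|z_j| = 1`), and let `σ_j` be the embedding of `ℚ(α)` with
`σ_j(α) = z_j`, so that `σ_j(p(α)) = p(z_j)` for `p ∈ ℚ[x]`. If `ω = p(α) ∈ ℚ(α)` is
irrational, then `σ_j(ω) ≠ ω` for some `j ∈ {1,…,m}`. -/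
theorem salem_embedding_moves_irrational
    (m : ℕ) (hm : 1 ≤ m) (α : ℝ) (hsalem : IsSalem α)
    (hdeg : (minpoly ℚ α).natDegree = 2 * m + 2)
    (z : Fin m → ℂ)
    (hroots : ∀ j, ((minpoly ℚ α).map (algebraMap ℚ ℂ)).IsRoot (z j))
    (hmod : ∀ j, ‖z j‖ = 1)
    (him : ∀ j, 0 < (z j).im)
    (hinj : Function.Injective z)
    (hall : ∀ w : ℂ, ((minpoly ℚ α).map (algebraMap ℚ ℂ)).IsRoot w →
      w = (α : ℂ) ∨ w = ((α⁻¹ : ℝ) : ℂ) ∨ ∃ j, w = z j ∨ w = (starRingEnd ℂ) (z j))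
    (p : Polynomial ℚ) (ω : ℝ) (hω : ω = Polynomial.aeval α p)
    (hirrat : ¬ ∃ r : ℚ, ω = (r : ℝ)) :
    ∃ j : Fin m, Polynomial.aeval (z j) p ≠ ((ω : ℝ) : ℂ) := by
  classical
  by_contra hcon
  push_neg at hcon
  have hint : IsIntegral ℚ α := hsalem.2.1.tower_top
  set P := minpoly ℚ α with hP
  have hP0 : P ≠ 0 := minpoly.ne_zero hint
  have hnodup : (P.aroots ℂ).Nodup :=
    Polynomial.nodup_roots ((Polynomial.separable_map _).mpr (minpoly.irreducible hint).separable)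
  have hcard : (P.aroots ℂ).card = 2 * m + 2 := by
    have hsp : (P.map (algebraMap ℚ ℂ)).Splits :=
      IsAlgClosed.splits _
    rw [Polynomial.aroots, (Polynomial.splits_iff_card_roots).mp hsp,
      Polynomial.natDegree_map, hdeg]
  -- the explicit multiset of roots
  set M : Multiset ℂ := (α : ℂ) ::ₘ ((α⁻¹ : ℝ) : ℂ) ::ₘ
    (Multiset.map z Finset.univ.val + Multiset.map (fun j => (starRingEnd ℂ) (z j))
      Finset.univ.val) with hM
  have hMcard : Multiset.card M = 2 * m + 2 := by
    simp [hM]; ring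
  have hsub : P.aroots ℂ ⊆ M := by
    intro w hw
    have hroot : (P.map (algebraMap ℚ ℂ)).IsRoot w :=
      Polynomial.isRoot_of_mem_roots hw
    rcases hall w hroot with h1 | h2 | ⟨j, h3 | h4⟩
    · simp [hM, h1]
    · simp [hM, h2]
    · subst h3
      exact Multiset.mem_cons_of_mem (Multiset.mem_cons_of_mem (Multiset.mem_add.mpr
        (Or.inl (Multiset.mem_map.mpr ⟨j, Finset.mem_univ j, rfl⟩))))
    · subst h4
      exact Multiset.mem_cons_of_mem (Multiset.mem_cons_of_mem (Multiset.mem_add.mpr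
        (Or.inr (Multiset.mem_map.mpr ⟨j, Finset.mem_univ j, rfl⟩))))
  have hle : P.aroots ℂ ≤ M := (Multiset.le_iff_subset hnodup).mpr hsub
  have hroots_eq : P.aroots ℂ = M :=
    Multiset.eq_of_le_of_card_le hle (by rw [hMcard, hcard])
  -- evaluating sums over the roots
  have hsum_eval : ∀ f : ℂ → ℂ, ((P.aroots ℂ).map f).sum =
      f ((α : ℝ) : ℂ) + f ((α⁻¹ : ℝ) : ℂ) + ((∑ j : Fin m, f (z j)) +
        ∑ j : Fin m, f ((starRingEnd ℂ) (z j))) := by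
    intro f
    rw [hroots_eq, hM]
    simp only [Multiset.map_cons, Multiset.sum_cons, Multiset.map_add, Multiset.sum_add,
      Multiset.map_map, Finset.sum_eq_multiset_sum, add_assoc]
    rfl
  -- the two trace relations
  set β : ℝ := Polynomial.aeval α⁻¹ p with hβdef
  have haev : ∀ (x : ℝ) (q : ℚ[X]),
      Polynomial.aeval ((x : ℝ) : ℂ) q = ((Polynomial.aeval x q : ℝ) : ℂ) := by
    intro x q
    have := Polynomial.aeval_algebraMap_apply ℂ x q
    simpa using this
  obtain ⟨r₁, hr₁⟩ := trace_aux α hint p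
  obtain ⟨r₂, hr₂⟩ := trace_aux α hint (p ^ 2)
  rw [hsum_eval] at hr₁ hr₂
  have hconjω : (starRingEnd ℂ) ((ω : ℝ) : ℂ) = ((ω : ℝ) : ℂ) := Complex.conj_ofReal ω
  have hzj : ∀ j : Fin m, Polynomial.aeval (z j) p = ((ω : ℝ) : ℂ) := hcon
  have hzjc : ∀ j : Fin m, Polynomial.aeval ((starRingEnd ℂ) (z j)) p = ((ω : ℝ) : ℂ) := by
    intro j; rw [aeval_conj_aux, hzj j, hconjω]
  set cR : ℝ := 2 * (m : ℝ) + 1 with hcRdef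
  have hr₁R : (r₁ : ℝ) = cR * ω + β := by
    rw [haev α p, haev α⁻¹ p, ← hω] at hr₁
    simp only [hzj, hzjc, Finset.sum_const, Finset.card_univ, Fintype.card_fin,
      nsmul_eq_mul] at hr₁
    rw [← hβdef] at hr₁
    have h2 : ((r₁ : ℝ) : ℂ) = ((cR * ω + β : ℝ) : ℂ) := by
      push_cast [hcRdef]
      linear_combination -hr₁
    exact_mod_cast h2
  have hr₂R : (r₂ : ℝ) = cR * ω ^ 2 + β ^ 2 := by
    simp only [map_pow] at hr₂
    rw [haev α p, haev α⁻¹ p, ← hω] at hr₂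
    simp only [hzj, hzjc, Finset.sum_const, Finset.card_univ, Fintype.card_fin,
      nsmul_eq_mul] at hr₂
    rw [← hβdef] at hr₂
    have h2 : ((r₂ : ℝ) : ℂ) = ((cR * ω ^ 2 + β ^ 2 : ℝ) : ℂ) := by
      push_cast [hcRdef]
      linear_combination -hr₂
    exact_mod_cast h2
  -- transfer: the quadratic relation satisfied by ω is satisfied by β
  set c : ℚ := 2 * m + 1 with hc
  have hcR : ((c : ℚ) : ℝ) = cR := by rw [hc, hcRdef]; push_cast; ring
  set g : ℚ[X] := Polynomial.C (c ^ 2 + c) * p ^ 2 - Polynomial.C (2 * r₁ * c) * p +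
    Polynomial.C (r₁ ^ 2 - r₂) with hg
  have hgα : Polynomial.aeval α g = 0 := by
    rw [hg]
    simp only [map_add, map_sub, map_mul, map_pow, Polynomial.aeval_C, eq_ratCast, ← hω]
    push_cast
    rw [hcR]
    linear_combination ((r₁ : ℝ) - cR * ω + β) * hr₁R - hr₂R
  have hdvd : P ∣ g := minpoly.dvd ℚ α hgα
  have hwroot : Polynomial.aeval (((α⁻¹ : ℝ) : ℂ)) P = 0 := by
    have hmem : (((α⁻¹ : ℝ) : ℂ)) ∈ P.aroots ℂ := by
      rw [hroots_eq, hM]; simp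
    exact (Polynomial.mem_aroots.mp hmem).2
  have hgβ : Polynomial.aeval (((α⁻¹ : ℝ) : ℂ)) g = 0 := by
    obtain ⟨h', hh⟩ := hdvd
    rw [hh, map_mul, hwroot, zero_mul]
  have hβrel : ((c:ℝ) ^ 2 + (c:ℝ)) * β ^ 2 - 2 * (r₁:ℝ) * (c:ℝ) * β +
      ((r₁:ℝ) ^ 2 - (r₂:ℝ)) = 0 := by
    have : Polynomial.aeval (((α⁻¹ : ℝ) : ℂ)) g =
        ((((c:ℝ) ^ 2 + (c:ℝ)) * β ^ 2 - 2 * (r₁:ℝ) * (c:ℝ) * β +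
          ((r₁:ℝ) ^ 2 - (r₂:ℝ)) : ℝ) : ℂ) := by
      rw [hg]
      simp only [map_add, map_sub, map_mul, map_pow, Polynomial.aeval_C, eq_ratCast]
      rw [haev α⁻¹ p, ← hβdef]
      push_cast
      ring
    rw [hgβ] at this
    exact_mod_cast (Complex.ofReal_inj.mp this.symm)
  -- conclude β = ω, hence ω rational: contradiction
  have hβω : β = ω := by
    have key : ((c:ℝ) ^ 2 - (c:ℝ)) * (β - ω) ^ 2 = 0 := by
      rw [hcR] at hβrel ⊢
      linear_combination hβrel - ((r₁:ℝ) + cR * ω + β - 2 * cR * β) * hr₁R + hr₂R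
    have hcpos : (0:ℝ) < (c:ℝ) ^ 2 - (c:ℝ) := by
      rw [hcR, hcRdef]
      have : (1:ℝ) ≤ (m : ℝ) := by exact_mod_cast hm
      nlinarith
    have := mul_eq_zero.mp key
    rcases this with h | h
    · exact absurd h (ne_of_gt hcpos)
    · have := pow_eq_zero_iff (n := 2) (by norm_num) |>.mp h
      linarith [sub_eq_zero.mp this]
  have : ω = ((r₁ / (c + 1) : ℚ) : ℝ) := by
    have hc1 : ((c:ℝ) + 1) ≠ 0 := by
      rw [hcR, hcRdef]; positivity
    rw [Rat.cast_div]
    push_cast [hcR]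
    rw [hcRdef] at hr₁R ⊢
    field_simp
    nlinarith [hr₁R, hβω]
  exact hirrat ⟨r₁ / (c + 1), this⟩


end
end

section
/- Let A be a d×d complex matrix, θ > 0 a real number, u ∈ ℂ^d a vector with Au = θu, and H₂ ⊆ ℂ^d an A-invariant subspace with ℂ^d = ℂu ⊕ H₂. Let ‖·‖_{H₂} be a norm on H₂ and ρ ≥ 0 be such that ‖Av‖_{H₂} ≤ ρ·‖v‖_{H₂} for all v ∈ H₂, and equip ℂ^d with the adapted norm ‖c·u + v‖ = max(|c|, ‖v‖_{H₂}) for c ∈ ℂ, v ∈ H₂. Let ε > 0 satisfy ρ + ε < θ and let δ ∈ (0,1). If ΔA is a d×d complex matrix whose operator norm with respect to the adapted norm satisfies ‖ΔA‖ < min{ε, δ·(θ − ρ − ε)}, then for any x = c₁u + v with c₁ > 0 real, v ∈ H₂ and ‖v‖_{H₂} ≤ δ·c₁, writing (A + ΔA)x = c₂u + w with c₂ ∈ ℂ and w ∈ H₂, one has |c₂| > c₁·(θ − ε) and ‖w‖_{H₂} < |c₂|·δ. -/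
open Matrix Set

noncomputable section

/-- **Lemma (one-step perturbation).** Let `A` be a matrix with eigenvector `u`, `Au = θu`,
and an invariant complement `H₂` on which `A` contracts by factor `ρ` in a norm `nH`; equip
`ℂ^d` with the adapted norm `‖c u + v‖ = max(|c|, nH v)`. If `‖ΔA‖ < min{ε, δ(θ − ρ − ε)}`
in the adapted operator norm, then `(A + ΔA)` maps the cone `{c₁ u + v : nH v ≤ δ c₁}` into
itself, expanding the `u`-coefficient by a factor `> θ − ε`. -/
theorem perturbed_cone_step
    (d : ℕ) (A ΔA : Matrix (Fin d) (Fin d) ℂ)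
    (θ : ℝ) (hθ : 0 < θ)
    (u : Fin d → ℂ) (hu : A *ᵥ u = (θ : ℂ) • u)
    (H₂ : Submodule ℂ (Fin d → ℂ))
    (hAinv : ∀ v ∈ H₂, A *ᵥ v ∈ H₂)
    (hcompl : IsCompl (Submodule.span ℂ {u}) H₂)
    -- the norm `‖·‖_{H₂}` on the invariant complement:
    (nH : (Fin d → ℂ) → ℝ)
    (hnH0 : ∀ v ∈ H₂, 0 ≤ nH v)
    (hnHeq : ∀ v ∈ H₂, (nH v = 0 ↔ v = 0))
    (hnHsmul : ∀ (a : ℂ), ∀ v ∈ H₂, nH (a • v) = ‖a‖ * nH v)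
    (hnHadd : ∀ v ∈ H₂, ∀ w ∈ H₂, nH (v + w) ≤ nH v + nH w)
    (ρ : ℝ) (hρ : 0 ≤ ρ)
    (hcontr : ∀ v ∈ H₂, nH (A *ᵥ v) ≤ ρ * nH v)
    (ε δ : ℝ) (hε : 0 < ε) (hρεθ : ρ + ε < θ) (hδ : δ ∈ Set.Ioo (0:ℝ) 1)
    -- `K` bounds the adapted operator norm of `ΔA`, `K < min{ε, δ(θ − ρ − ε)}`:
    (K : ℝ) (hK0 : 0 ≤ K) (hK : K < min ε (δ * (θ - ρ - ε)))
    (hΔop : ∀ (c : ℂ) (v : Fin d → ℂ), v ∈ H₂ →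
      ∀ (c' : ℂ) (w : Fin d → ℂ), w ∈ H₂ →
        ΔA *ᵥ (c • u + v) = c' • u + w →
        max (‖c'‖) (nH w) ≤ K * max (‖c‖) (nH v))
    (c₁ : ℝ) (hc₁ : 0 < c₁)
    (v : Fin d → ℂ) (hv : v ∈ H₂) (hvn : nH v ≤ δ * c₁)
    (c₂ : ℂ) (w : Fin d → ℂ) (hw : w ∈ H₂)
    (hdecomp : (A + ΔA) *ᵥ ((c₁ : ℂ) • u + v) = c₂ • u + w) :
    c₁ * (θ - ε) < ‖c₂‖ ∧ nH w < ‖c₂‖ * δ := by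
  obtain ⟨hδ0, hδ1⟩ := hδ
  have hn0 : nH 0 = 0 := (hnHeq 0 H₂.zero_mem).mpr rfl
  have hKε : K < ε := lt_of_lt_of_le hK (min_le_left _ _)
  have hKδ : K < δ * (θ - ρ - ε) := lt_of_lt_of_le hK (min_le_right _ _)
  -- u ≠ 0
  have hu0 : u ≠ 0 := by
    intro h
    have h0 : ΔA *ᵥ ((1:ℂ) • u + 0) = ((K:ℂ)+1) • u + 0 := by simp [h]
    have h1 := hΔop 1 0 H₂.zero_mem ((K:ℂ)+1) 0 H₂.zero_mem h0
    have h2 : ‖((K:ℂ)+1)‖ = K + 1 := by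
      rw [show ((K:ℂ)+1) = ((K+1:ℝ):ℂ) by push_cast; ring, Complex.norm_real, Real.norm_eq_abs,
        abs_of_pos (by linarith)]
    simp [hn0, h2] at h1
    linarith
  -- decompose ΔA *ᵥ x
  have hx : ΔA *ᵥ ((c₁:ℂ) • u + v) ∈ Submodule.span ℂ {u} ⊔ H₂ := by
    rw [hcompl.sup_eq_top]; trivial
  obtain ⟨s, hs, w', hw', hsum⟩ := Submodule.mem_sup.mp hx
  obtain ⟨c', rfl⟩ := Submodule.mem_span_singleton.mp hs
  have hAx : A *ᵥ ((c₁:ℂ) • u + v) = ((c₁:ℂ) * θ) • u + A *ᵥ v := by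
    rw [mulVec_add, mulVec_smul, hu, smul_smul]
  have key : ((c₁:ℂ)*θ + c') • u + (A *ᵥ v + w') = c₂ • u + w := by
    rw [← hdecomp, add_mulVec, hAx, ← hsum]; module
  have heq2 : ((c₁:ℂ)*θ + c' - c₂) • u = w - (A *ᵥ v + w') := by
    rw [sub_smul, sub_eq_sub_iff_add_eq_add, key, add_comm]
  have hVmem : A *ᵥ v + w' ∈ H₂ := H₂.add_mem (hAinv v hv) hw'
  have hz : ((c₁:ℂ)*θ + c' - c₂) • u = 0 := by
    have h1 : ((c₁:ℂ)*θ + c' - c₂) • u ∈ Submodule.span ℂ {u} ⊓ H₂ :=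
      ⟨Submodule.smul_mem _ _ (Submodule.mem_span_singleton_self u),
        heq2 ▸ H₂.sub_mem hw hVmem⟩
    rw [hcompl.inf_eq_bot] at h1
    exact h1
  have hc₂ : c₂ = (c₁:ℂ)*θ + c' := by
    rcases smul_eq_zero.mp hz with h | h
    · linear_combination -h
    · exact absurd h hu0
  have hweq : w = A *ᵥ v + w' := by
    have := heq2
    rw [hz] at this
    exact (sub_eq_zero.mp this.symm)
  -- estimates
  have hvc : nH v ≤ c₁ := le_trans hvn (by nlinarith)
  have hmax : max (‖c'‖) (nH w') ≤ K * c₁ := by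
    have h := hΔop c₁ v hv c' w' hw' hsum.symm
    rwa [Complex.norm_real, Real.norm_eq_abs, abs_of_pos hc₁, max_eq_left hvc] at h
  have hc' : ‖c'‖ ≤ K * c₁ := le_trans (le_max_left _ _) hmax
  have hw'n : nH w' ≤ K * c₁ := le_trans (le_max_right _ _) hmax
  have habs : c₁ * θ ≤ ‖c₂‖ + ‖c'‖ := by
    have h1 : ‖((c₁:ℂ)*θ)‖ = c₁ * θ := by
      rw [show ((c₁:ℂ)*θ) = ((c₁*θ:ℝ):ℂ) by push_cast; ring, Complex.norm_real, Real.norm_eq_abs,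
        abs_of_pos (by positivity)]
    calc c₁ * θ = ‖(c₂ + (-c'))‖ := by
          rw [hc₂, show (↑c₁ * ↑θ + c' + -c') = ((c₁:ℂ)*θ) by ring]; exact h1.symm
      _ ≤ ‖c₂‖ + ‖(-c')‖ := norm_add_le _ _
      _ = ‖c₂‖ + ‖c'‖ := by rw [norm_neg]
  have hfirst : c₁ * (θ - ε) < ‖c₂‖ := by nlinarith
  refine ⟨hfirst, ?_⟩
  have hnw : nH w ≤ ρ * nH v + K * c₁ := by
    rw [hweq]
    exact le_trans (hnHadd _ (hAinv v hv) _ hw') (by linarith [hcontr v hv])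
  have hnv0 : 0 ≤ nH v := hnH0 v hv
  nlinarith

end
end
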